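/- Let B be a quasi-greedy basis in a real Banach space X and define the expansional best approximation σ̃_N(x) = inf{‖x − S_Γ(x)‖ : |Γ| ≤ N} and ẽ_N = sup_x ‖x − G_N(x)‖/σ̃_N(x). Then ẽ_N ≥ c·μ(N) for a constant c > 0 depending only on the quasi-greedy constant; combined with the upper bound, μ(N) ≲ ẽ_N ≤ e_N ≲ μ(N) log N. -/

import Mathlib

open Finset Filter

/-- A (seminormalized Schauder) basis of a real normed space, given by the basis
vectors `e k` together with the coefficient functionals `coeff k`. -/
structure QGBasis (X : Type*) [NormedAddCommGroup X] [NormedSpace ℝ X] where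
  e : ℕ → X
  coeff : ℕ → X → ℝ
  coeff_add : ∀ k x y, coeff k (x + y) = coeff k x + coeff k y
  coeff_smul : ∀ (k : ℕ) (c : ℝ) (x : X), coeff k (c • x) = c * coeff k x
  coeff_e : ∀ j k, coeff j (e k) = if j = k then 1 else 0
  expansion : ∀ x : X,
    Tendsto (fun N => ∑ k ∈ Finset.range N, coeff k x • e k) atTop (nhds x)
  c_norm : ℝ
  C_norm : ℝ
  c_norm_pos : 0 < c_norm
  norm_e_ge : ∀ k, c_norm ≤ ‖e k‖
  norm_e_le : ∀ k, ‖e k‖ ≤ C_norm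

namespace QGBasis

variable {X : Type*} [NormedAddCommGroup X] [NormedSpace ℝ X] (B : QGBasis X)

/-- `π` enumerates the coefficients of `x` in decreasing order of modulus;
position `k` (zero-based) carries the `(k+1)`-st largest coefficient. -/
def IsGreedyPerm (x : X) (π : ℕ → ℕ) : Prop :=
  Function.Bijective π ∧ ∀ k, |B.coeff (π (k + 1)) x| ≤ |B.coeff (π k) x|

/-- The thresholding greedy approximation of order `N` associated to the
greedy enumeration `π`. -/
def G (π : ℕ → ℕ) (N : ℕ) (x : X) : X :=
  ∑ k ∈ Finset.range N, B.coeff (π k) x • B.e (π k)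

/-- `B` is quasi-greedy with constant `K`. -/
def QuasiGreedyWith (K : ℝ) : Prop :=
  ∀ (x : X) (π : ℕ → ℕ), B.IsGreedyPerm x π → ∀ N,
    ‖B.G π N x‖ ≤ K * ‖x‖ ∧ ‖x - B.G π N x‖ ≤ K * ‖x‖

/-- Coordinate projection onto the index set `Γ`. -/
def S (Γ : Finset ℕ) (x : X) : X := ∑ k ∈ Γ, B.coeff k x • B.e k

/-- Right democracy function. -/
noncomputable def hr (N : ℕ) : ℝ :=
  sSup {r | ∃ Γ : Finset ℕ, Γ.card = N ∧ r = ‖∑ k ∈ Γ, B.e k‖}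

/-- Left democracy function. -/
noncomputable def hl (N : ℕ) : ℝ :=
  sInf {r | ∃ Γ : Finset ℕ, Γ.card = N ∧ r = ‖∑ k ∈ Γ, B.e k‖}

/-- The democracy ratio `μ(N) = sup_{1 ≤ k ≤ N} h_r(k)/h_l(k)`. -/
noncomputable def mu (N : ℕ) : ℝ :=
  sSup {r | ∃ k, 1 ≤ k ∧ k ≤ N ∧ r = B.hr k / B.hl k}

/-- Best `N`-term approximation error. -/
noncomputable def sigma (N : ℕ) (x : X) : ℝ :=
  sInf {r | ∃ (Γ : Finset ℕ) (b : ℕ → ℝ),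
    Γ.card ≤ N ∧ r = ‖x - ∑ k ∈ Γ, b k • B.e k‖}

/-- `Γ` is a greedy set for `x`: every coefficient inside dominates every
coefficient outside. -/
def IsGreedySet (x : X) (Γ : Finset ℕ) : Prop :=
  ∀ j ∈ Γ, ∀ i ∉ Γ, |B.coeff i x| ≤ |B.coeff j x|

end QGBasis

namespace QGBasis

variable {X : Type*} [NormedAddCommGroup X] [NormedSpace ℝ X] (B : QGBasis X)

/-- Expansional best `N`-term approximation error. -/
noncomputable def sigmaT (N : ℕ) (x : X) : ℝ :=
  sInf {r | ∃ Γ : Finset ℕ, Γ.card ≤ N ∧ r = ‖x - B.S Γ x‖}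

/-- `e_N = sup_x ‖x − G_N(x)‖/σ_N(x)` with the convention `0/0 = 1`. -/
noncomputable def eN (N : ℕ) : ℝ :=
  sSup ({1} ∪ {r | ∃ (x : X) (π : ℕ → ℕ), B.IsGreedyPerm x π ∧
    B.sigma N x ≠ 0 ∧ r = ‖x - B.G π N x‖ / B.sigma N x})

/-- `ẽ_N = sup_x ‖x − G_N(x)‖/σ̃_N(x)` with the convention `0/0 = 1`. -/
noncomputable def tildeEN (N : ℕ) : ℝ :=
  sSup ({1} ∪ {r | ∃ (x : X) (π : ℕ → ℕ), B.IsGreedyPerm x π ∧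
    B.sigmaT N x ≠ 0 ∧ r = ‖x - B.G π N x‖ / B.sigmaT N x})

end QGBasis


namespace QGBasis
variable {X : Type*} [NormedAddCommGroup X] [NormedSpace ℝ X] (B : QGBasis X)

lemma coeff_zero (k : ℕ) : B.coeff k 0 = 0 := by
  have h := B.coeff_add k 0 0
  simp only [add_zero] at h
  linarith

/-- coefficient functional as an `AddMonoidHom`. -/
def coeffHom (k : ℕ) : X →+ ℝ := AddMonoidHom.mk' (B.coeff k) (B.coeff_add k)

@[simp] lemma coeffHom_apply (k : ℕ) (x : X) : B.coeffHom k x = B.coeff k x := rfl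

lemma coeff_sub (k : ℕ) (x y : X) : B.coeff k (x - y) = B.coeff k x - B.coeff k y :=
  map_sub (B.coeffHom k) x y

lemma coeff_sum {ι : Type*} (k : ℕ) (T : Finset ι) (f : ι → X) :
    B.coeff k (∑ i ∈ T, f i) = ∑ i ∈ T, B.coeff k (f i) :=
  map_sum (B.coeffHom k) f T

lemma coeff_finsum (j : ℕ) (T : Finset ℕ) (c : ℕ → ℝ) :
    B.coeff j (∑ k ∈ T, c k • B.e k) = if j ∈ T then c j else 0 := by
  rw [B.coeff_sum]
  have : ∀ k ∈ T, B.coeff j (c k • B.e k) = if k = j then c j else 0 := by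
    intro k _
    rw [B.coeff_smul, B.coeff_e]
    by_cases h : j = k
    · subst h; simp
    · simp [h, Ne.symm h]
  rw [Finset.sum_congr rfl this, Finset.sum_ite_eq']

lemma S_finsum (Γ T : Finset ℕ) (c : ℕ → ℝ) :
    B.S Γ (∑ k ∈ T, c k • B.e k) = ∑ k ∈ Γ ∩ T, c k • B.e k := by
  unfold S
  rw [← Finset.sum_filter_add_sum_filter_not Γ (· ∈ T)]
  have h1 : ∀ k ∈ Γ.filter (· ∈ T), B.coeff k (∑ k ∈ T, c k • B.e k) • B.e k = c k • B.e k := by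
    intro k hk; rw [B.coeff_finsum]; simp at hk; simp [hk.2]
  have h2 : ∀ k ∈ Γ.filter (¬ · ∈ T), B.coeff k (∑ k ∈ T, c k • B.e k) • B.e k = 0 := by
    intro k hk; rw [B.coeff_finsum]; simp at hk; simp [hk.2]
  rw [Finset.sum_congr rfl h1, Finset.sum_congr rfl h2, Finset.sum_const_zero, add_zero,
    Finset.filter_mem_eq_inter]

lemma S_sub (Γ : Finset ℕ) (x y : X) : B.S Γ (x - y) = B.S Γ x - B.S Γ y := by
  unfold S
  rw [← Finset.sum_sub_distrib]
  refine Finset.sum_congr rfl fun k _ => ?_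
  rw [B.coeff_sub, sub_smul]

lemma S_union_disjoint {Γ Δ : Finset ℕ} (h : Disjoint Γ Δ) (x : X) :
    B.S (Γ ∪ Δ) x = B.S Γ x + B.S Δ x := by
  unfold S; rw [Finset.sum_union h]

lemma G_eq_S {π : ℕ → ℕ} (hπ : Function.Injective π) (N : ℕ) (x : X) :
    B.G π N x = B.S ((Finset.range N).image π) x := by
  unfold G S
  rw [Finset.sum_image (fun a _ b _ h => hπ h)]

lemma norm_finsum_le (T : Finset ℕ) (c : ℕ → ℝ) (M : ℝ) (hc : ∀ k ∈ T, |c k| ≤ M) :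
    ‖∑ k ∈ T, c k • B.e k‖ ≤ T.card * (M * B.C_norm) := by
  calc ‖∑ k ∈ T, c k • B.e k‖ ≤ ∑ k ∈ T, ‖c k • B.e k‖ := norm_sum_le _ _
    _ ≤ ∑ k ∈ T, M * B.C_norm := by
        refine Finset.sum_le_sum fun k hk => ?_
        rw [norm_smul, Real.norm_eq_abs]
        have h1 := B.norm_e_le k
        have h2 := hc k hk
        have h3 : (0:ℝ) ≤ ‖B.e k‖ := norm_nonneg _
        nlinarith [abs_nonneg (c k)]
    _ = T.card * (M * B.C_norm) := by rw [Finset.sum_const, nsmul_eq_mul]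

lemma norm_S_le_card (Γ : Finset ℕ) (x : X) (M : ℝ) (hc : ∀ k ∈ Γ, |B.coeff k x| ≤ M) :
    ‖B.S Γ x‖ ≤ Γ.card * (M * B.C_norm) := B.norm_finsum_le Γ _ M hc

end QGBasis

namespace QGBasis
variable {X : Type*} [NormedAddCommGroup X] [NormedSpace ℝ X] (B : QGBasis X)

lemma tendsto_coeff (x : X) : Tendsto (fun k => B.coeff k x) atTop (nhds 0) := by
  have h := B.expansion x
  have h2 : Tendsto (fun k => B.coeff k x • B.e k) atTop (nhds 0) := by
    have h3 := (h.comp (tendsto_add_atTop_nat 1)).sub h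
    simp only [sub_self] at h3
    have : ∀ k, (∑ i ∈ Finset.range (k+1), B.coeff i x • B.e i)
        - (∑ i ∈ Finset.range k, B.coeff i x • B.e i) = B.coeff k x • B.e k := by
      intro k; rw [Finset.sum_range_succ]; abel
    refine h3.congr fun k => ?_
    simp only [Function.comp]
    exact this k
  refine squeeze_zero_norm (f := fun k => B.coeff k x)
    (a := fun k => ‖B.coeff k x • B.e k‖ / B.c_norm) (fun k => ?_) ?_
  · rw [Real.norm_eq_abs, le_div_iff₀ B.c_norm_pos, norm_smul, Real.norm_eq_abs]
    exact mul_le_mul_of_nonneg_left (B.norm_e_ge k) (abs_nonneg _)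
  · have := h2.norm.div_const B.c_norm
    simpa using this

lemma finite_coeff_gt (x : X) {t : ℝ} (ht : 0 < t) : {k | t < |B.coeff k x|}.Finite := by
  have h := (B.tendsto_coeff x).abs
  simp only [abs_zero] at h
  have h2 := h.eventually_lt_const ht
  rw [eventually_atTop] at h2
  obtain ⟨M, hM⟩ := h2
  refine (Set.finite_Iio M).subset fun k hk => ?_
  simp only [Set.mem_Iio]
  by_contra hc
  exact absurd (hM k (le_of_not_gt hc)) (not_lt.mpr (le_of_lt hk))

/-- Enumeration of ℕ along an injective function into a linear order with finite
down-sets, in increasing order. -/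
lemma exists_enum {β : Type*} [LinearOrder β] (g : ℕ → β)
    (hg : Function.Injective g) (hfin : ∀ i, {j | g j < g i}.Finite) :
    ∃ π : ℕ → ℕ, Function.Bijective π ∧ ∀ k, g (π k) ≤ g (π (k+1)) := by
  set rank : ℕ → ℕ := fun i => (hfin i).toFinset.card with hrank
  have mono : ∀ i j, g i < g j → rank i < rank j := by
    intro i j hij
    refine Finset.card_lt_card ?_
    rw [Finset.ssubset_iff_of_subset]
    · exact ⟨i, by simp [Set.Finite.mem_toFinset, hij], by simp [Set.Finite.mem_toFinset]⟩
    · intro k hk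
      simp only [Set.Finite.mem_toFinset, Set.mem_setOf_eq] at hk ⊢
      exact hk.trans hij
  have inj : Function.Injective rank := by
    intro i j hij
    by_contra hne
    rcases lt_or_gt_of_ne (fun h : g i = g j => hne (hg h)) with h | h
    · exact absurd hij (Nat.ne_of_lt (mono _ _ h))
    · exact absurd hij.symm (Nat.ne_of_lt (mono _ _ h))
  have surj : Function.Surjective rank := by
    intro n
    induction n with
    | zero =>
      obtain ⟨m, hm, hmin⟩ := (insert 0 (hfin 0).toFinset).exists_min_image g
        ⟨0, Finset.mem_insert_self _ _⟩
      refine ⟨m, ?_⟩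
      rw [hrank]
      simp only [Finset.card_eq_zero]
      rw [Finset.eq_empty_iff_forall_notMem]
      intro j hj
      simp only [Set.Finite.mem_toFinset, Set.mem_setOf_eq] at hj
      have hj' : j ∈ insert 0 (hfin 0).toFinset := by
        rcases lt_or_ge (g j) (g 0) with h | h
        · exact Finset.mem_insert_of_mem ((hfin 0).mem_toFinset.mpr h)
        · exact absurd (lt_of_lt_of_le hj (le_trans (hmin 0 (Finset.mem_insert_self _ _)) h))
            (lt_irrefl _)
      exact absurd hj (not_lt.mpr (hmin j hj'))
    | succ n ih =>
      obtain ⟨i, hi⟩ := ih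
      obtain ⟨j0, hj0⟩ := Infinite.exists_notMem_finset (insert i (hfin i).toFinset)
      have hij0 : g i < g j0 := by
        rcases lt_trichotomy (g i) (g j0) with h | h | h
        · exact h
        · exact absurd (hg h) (fun he => hj0 (he ▸ Finset.mem_insert_self _ _))
        · exact absurd (Finset.mem_insert_of_mem ((hfin i).mem_toFinset.mpr h)) hj0
      set F := insert j0 ((hfin j0).toFinset.filter (fun j => g i < g j)) with hF
      obtain ⟨m, hmF, hmin⟩ := F.exists_min_image g ⟨j0, Finset.mem_insert_self _ _⟩
      have him : g i < g m := by
        rcases Finset.mem_insert.mp hmF with h | h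
        · exact h ▸ hij0
        · exact (Finset.mem_filter.mp h).2
      have hminT : ∀ j, g i < g j → g m ≤ g j := by
        intro j hj
        rcases lt_or_ge (g j) (g j0) with h | h
        · exact hmin j (Finset.mem_insert_of_mem (Finset.mem_filter.mpr
            ⟨(hfin j0).mem_toFinset.mpr h, hj⟩))
        · exact le_trans (hmin j0 (Finset.mem_insert_self _ _)) h
      refine ⟨m, ?_⟩
      have hset : (hfin m).toFinset = insert i (hfin i).toFinset := by
        ext j
        simp only [Set.Finite.mem_toFinset, Set.mem_setOf_eq, Finset.mem_insert]
        constructor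
        · intro hj
          rcases lt_trichotomy (g j) (g i) with h | h | h
          · exact Or.inr h
          · exact Or.inl (hg h)
          · exact absurd (hminT j h) (not_le.mpr hj)
        · intro hj
          rcases hj with h | h
          · exact h ▸ him
          · exact lt_trans h him
      rw [hrank]
      simp only at hset ⊢
      rw [hset, Finset.card_insert_of_notMem (by simp [Set.Finite.mem_toFinset])]
      rw [hrank] at hi
      simp only at hi
      omega
  set eqv := Equiv.ofBijective rank ⟨inj, surj⟩ with heqv
  refine ⟨eqv.symm, eqv.symm.bijective, fun k => ?_⟩
  have h1 : rank (eqv.symm k) = k := eqv.apply_symm_apply k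
  have h2 : rank (eqv.symm (k+1)) = k+1 := eqv.apply_symm_apply (k+1)
  by_contra hc
  push_neg at hc
  have := mono _ _ hc
  rw [h1, h2] at this
  omega

lemma nice_of_pred_finite (x : X)
    (H : ∀ i, {j | |B.coeff i x| < |B.coeff j x| ∨
      (|B.coeff j x| = |B.coeff i x| ∧ j < i)}.Finite) :
    ∃ π, B.IsGreedyPerm x π := by
  set g : ℕ → ℝ ×ₗ ℕ := fun i => toLex (-|B.coeff i x|, i) with hg
  have hginj : Function.Injective g := by
    intro i j hij
    rw [hg] at hij
    have := congrArg (fun p => (ofLex p).2) hij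
    simpa using this
  have hlt : ∀ i j, g j < g i ↔ (|B.coeff i x| < |B.coeff j x| ∨
      (|B.coeff j x| = |B.coeff i x| ∧ j < i)) := by
    intro i j
    rw [hg]
    simp only [Prod.Lex.lt_iff]
    constructor
    · rintro (h | ⟨h1, h2⟩)
      · exact Or.inl (by simpa using h)
      · exact Or.inr ⟨by simpa using neg_injective h1, by simpa using h2⟩
    · rintro (h | ⟨h1, h2⟩)
      · exact Or.inl (by simpa using h)
      · exact Or.inr ⟨by simp [h1], by simpa using h2⟩
  have hfin : ∀ i, {j | g j < g i}.Finite := by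
    intro i
    refine (H i).subset fun j hj => ?_
    rw [Set.mem_setOf_eq, hlt] at hj
    exact hj
  obtain ⟨π, hbij, hmono⟩ := exists_enum g hginj hfin
  refine ⟨π, hbij, fun k => ?_⟩
  have := hmono k
  rw [hg] at this
  rcases Prod.Lex.le_iff.mp this with h | ⟨h1, _⟩
  · simp only [ofLex_toLex] at h
    linarith
  · simp only [ofLex_toLex] at h1
    linarith [h1]

lemma nice_of_finite_support (x : X) (h : {j | B.coeff j x ≠ 0}.Finite) :
    ∃ π, B.IsGreedyPerm x π := by
  refine B.nice_of_pred_finite x fun i => ?_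
  refine (h.union (Set.finite_Iio i)).subset fun j hj => ?_
  rcases hj with hj | ⟨_, hj⟩
  · refine Or.inl (fun hc => ?_)
    rw [hc] at hj
    simp only [abs_zero] at hj
    linarith [abs_nonneg (B.coeff i x)]
  · exact Or.inr hj

lemma nice_of_forall_ne (x : X) (h0 : ∀ j, B.coeff j x ≠ 0) :
    ∃ π, B.IsGreedyPerm x π := by
  refine B.nice_of_pred_finite x fun i => ?_
  have hpos : 0 < |B.coeff i x| := abs_pos.mpr (h0 i)
  have h1 : {j | |B.coeff i x| / 2 < |B.coeff j x|}.Finite :=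
    B.finite_coeff_gt x (by linarith)
  refine h1.subset fun j hj => ?_
  rcases hj with hj | ⟨hj, _⟩
  · simp only [Set.mem_setOf_eq]; linarith
  · simp only [Set.mem_setOf_eq]; linarith

end QGBasis

namespace QGBasis
variable {X : Type*} [NormedAddCommGroup X] [NormedSpace ℝ X] (B : QGBasis X)

lemma le_of_forall_pos_mul {a b C : ℝ} (h : ∀ δ : ℝ, 0 < δ → a ≤ b + δ * C) : a ≤ b := by
  refine le_of_forall_pos_le_add fun ε hε => ?_
  rcases le_or_gt C 0 with hC | hC
  · have h1 := h 1 one_pos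
    nlinarith
  · have h1 := h (ε / C) (by positivity)
    rw [div_mul_cancel₀ _ (ne_of_gt hC)] at h1
    linarith

lemma greedyPerm_anti {x : X} {π : ℕ → ℕ} (hπ : B.IsGreedyPerm x π) {m n : ℕ} (h : m ≤ n) :
    |B.coeff (π n) x| ≤ |B.coeff (π m) x| := by
  induction n, h using Nat.le_induction with
  | base => exact le_refl _
  | succ n hmn ih => exact le_trans (hπ.2 n) ih

lemma abs_coeff_le {K : ℝ} (hK : B.QuasiGreedyWith K) {x : X} {π : ℕ → ℕ}
    (hπ : B.IsGreedyPerm x π) (j : ℕ) : B.c_norm * |B.coeff j x| ≤ K * ‖x‖ := by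
  obtain ⟨m, hm⟩ := hπ.1.2 j
  have h1 : |B.coeff j x| ≤ |B.coeff (π 0) x| := hm ▸ B.greedyPerm_anti hπ (Nat.zero_le m)
  have h2 := (hK x π hπ 1).1
  have h3 : B.G π 1 x = B.coeff (π 0) x • B.e (π 0) := by
    unfold G; simp
  rw [h3, norm_smul, Real.norm_eq_abs] at h2
  have h4 := B.norm_e_ge (π 0)
  have h5 : B.c_norm * |B.coeff (π 0) x| ≤ |B.coeff (π 0) x| * ‖B.e (π 0)‖ := by
    rw [mul_comm]
    exact mul_le_mul_of_nonneg_left h4 (abs_nonneg _)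
  calc B.c_norm * |B.coeff j x| ≤ B.c_norm * |B.coeff (π 0) x| := by
        exact mul_le_mul_of_nonneg_left h1 (le_of_lt B.c_norm_pos)
    _ ≤ K * ‖x‖ := le_trans h5 h2

lemma prefix_eq_of_strict {x : X} {π : ℕ → ℕ} (hπ : B.IsGreedyPerm x π) {E : Finset ℕ}
    (hE : ∀ j ∈ E, ∀ i ∉ E, |B.coeff i x| < |B.coeff j x|) :
    (Finset.range E.card).image π = E := by
  have hinj : Function.Injective π := hπ.1.1
  refine Finset.eq_of_subset_of_card_le ?_ ?_
  · intro y hy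
    obtain ⟨m, hm, hmy⟩ := Finset.mem_image.mp hy
    rw [Finset.mem_range] at hm
    by_contra hyE
    -- positions of E under π⁻¹
    set σe := Equiv.ofBijective π hπ.1 with hσe
    set P := E.image (fun j => σe.symm j) with hP
    have hPcard : P.card = E.card := Finset.card_image_of_injective _ σe.symm.injective
    have hPel : ∀ p ∈ P, π p ∈ E := by
      intro p hp
      obtain ⟨j, hj, hjp⟩ := Finset.mem_image.mp hp
      have : π p = j := by
        rw [← hjp]
        exact σe.apply_symm_apply j
      rw [this]; exact hj
    by_cases hall : ∀ p ∈ P, p < E.card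
    · have hsub : P ⊆ Finset.range E.card := fun p hp => Finset.mem_range.mpr (hall p hp)
      have : P = Finset.range E.card :=
        Finset.eq_of_subset_of_card_le hsub (by rw [hPcard, Finset.card_range])
      have hmP : m ∈ P := this ▸ Finset.mem_range.mpr hm
      rw [← hmy] at hyE
      exact hyE (hPel m hmP)
    · push_neg at hall
      obtain ⟨p, hp, hpge⟩ := hall
      have h1 : |B.coeff (π p) x| ≤ |B.coeff (π m) x| :=
        B.greedyPerm_anti hπ (le_trans (le_of_lt hm) hpge)
      have h2 : |B.coeff (π m) x| < |B.coeff (π p) x| := by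
        rw [hmy]
        exact hE (π p) (hPel p hp) y hyE
      rw [hmy] at h1
      rw [hmy] at h2
      linarith
  · rw [Finset.card_image_of_injective _ hinj, Finset.card_range]

lemma G_eq_S_prefix {x : X} {π : ℕ → ℕ} (hπ : B.IsGreedyPerm x π) {E : Finset ℕ}
    (hE : ∀ j ∈ E, ∀ i ∉ E, |B.coeff i x| < |B.coeff j x|) :
    B.G π E.card x = B.S E x := by
  rw [B.G_eq_S hπ.1.1, B.prefix_eq_of_strict hπ hE]

lemma strict_proj_bound {K : ℝ} (hK : B.QuasiGreedyWith K) {x : X}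
    (hx : ∃ π, B.IsGreedyPerm x π) {E : Finset ℕ}
    (hE : ∀ j ∈ E, ∀ i ∉ E, |B.coeff i x| < |B.coeff j x|) :
    ‖B.S E x‖ ≤ K * ‖x‖ ∧ ‖x - B.S E x‖ ≤ K * ‖x‖ := by
  obtain ⟨π, hπ⟩ := hx
  have h := hK x π hπ E.card
  rw [B.G_eq_S_prefix hπ hE] at h
  exact h

lemma one_le_K {K : ℝ} (hK : B.QuasiGreedyWith K) : 1 ≤ K := by
  set x := B.e 0 with hx
  have hcoeff : ∀ j, B.coeff j x = if j = 0 then 1 else 0 := fun j => B.coeff_e j 0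
  have hnice : ∃ π, B.IsGreedyPerm x π := by
    refine B.nice_of_finite_support x ((Set.finite_singleton 0).subset fun j hj => ?_)
    simp only [Set.mem_setOf_eq] at hj
    by_contra hj0
    have hj0' : j ≠ 0 := by simpa using hj0
    rw [hcoeff j, if_neg hj0'] at hj
    exact hj rfl
  obtain ⟨π, hπ⟩ := hnice
  have hπ0 : π 0 = 0 := by
    obtain ⟨m, hm⟩ := hπ.1.2 0
    have h1 : |B.coeff (π m) x| ≤ |B.coeff (π 0) x| := B.greedyPerm_anti hπ (Nat.zero_le m)
    rw [hm, hcoeff 0, if_pos rfl] at h1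
    by_contra hne
    rw [hcoeff (π 0), if_neg hne] at h1
    simp at h1
    linarith
  have h2 := (hK x π hπ 1).1
  have h3 : B.G π 1 x = x := by
    unfold G
    simp [hπ0, hcoeff 0]
    exact hx.symm
  rw [h3] at h2
  have h4 : 0 < ‖x‖ := lt_of_lt_of_le B.c_norm_pos (B.norm_e_ge 0)
  nlinarith

/-- Unconditionality for coefficients of constant modulus. -/
lemma ucc {K : ℝ} (hK : B.QuasiGreedyWith K) {A B' : Finset ℕ} (hBA : B' ⊆ A)
    {σc : ℕ → ℝ} {t : ℝ} (ht : 0 < t) (hσ : ∀ k ∈ A, |σc k| = t) :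
    ‖∑ k ∈ B', σc k • B.e k‖ ≤ K * ‖∑ k ∈ A, σc k • B.e k‖ := by
  set nB := ‖∑ k ∈ B', σc k • B.e k‖ with hnB
  set nA := ‖∑ k ∈ A, σc k • B.e k‖ with hnA
  refine le_of_forall_pos_mul (C := K * nB - nB) fun δ hδ => ?_
  set c' : ℕ → ℝ := fun k => σc k + (if k ∈ B' then δ * σc k else 0) with hc'
  set v := ∑ k ∈ A, c' k • B.e k with hv
  have hvsplit : v = (∑ k ∈ A, σc k • B.e k) + δ • ∑ k ∈ B', σc k • B.e k := by
    rw [hv]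
    have h2 : ∀ k ∈ A, c' k • B.e k
        = σc k • B.e k + (if k ∈ B' then (δ * σc k) • B.e k else 0) := by
      intro k _
      rw [hc']
      dsimp only
      rw [add_smul]
      congr 1
      split <;> simp
    rw [Finset.sum_congr rfl h2, Finset.sum_add_distrib]
    congr 1
    rw [Finset.sum_ite_mem, Finset.inter_eq_right.mpr hBA, Finset.smul_sum]
    refine Finset.sum_congr rfl fun k _ => ?_
    rw [smul_smul]
  have hcoeff : ∀ j, B.coeff j v = if j ∈ A then c' j else 0 := fun j => B.coeff_finsum j A c'
  have hnice : ∃ π, B.IsGreedyPerm v π := by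
    refine B.nice_of_finite_support v (A.finite_toSet.subset fun j hj => ?_)
    simp only [Set.mem_setOf_eq] at hj
    by_contra hjA
    rw [Finset.mem_coe] at hjA
    rw [hcoeff j, if_neg hjA] at hj
    exact hj rfl
  have hstrict : ∀ j ∈ B', ∀ i ∉ B', |B.coeff i v| < |B.coeff j v| := by
    intro j hj i hi
    have hjA := hBA hj
    rw [hcoeff j, if_pos hjA, hc']
    dsimp only
    rw [if_pos hj]
    have habsj : |σc j + δ * σc j| = (1 + δ) * t := by
      have : σc j + δ * σc j = (1 + δ) * σc j := by ring
      rw [this, abs_mul, hσ j hjA, abs_of_pos (by linarith)]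
    rw [habsj]
    rcases Finset.decidableMem i A with hiA | hiA
    · rw [hcoeff i, if_neg hiA]
      simp only [abs_zero]
      positivity
    · rw [hcoeff i, if_pos hiA, hc']
      dsimp only
      rw [if_neg hi, add_zero, hσ i hiA]
      nlinarith
  have hSB : B.S B' v = (1 + δ) • ∑ k ∈ B', σc k • B.e k := by
    have h1 : B.S B' v = ∑ k ∈ B' ∩ A, c' k • B.e k := B.S_finsum B' A c'
    rw [h1, Finset.inter_eq_left.mpr hBA, Finset.smul_sum]
    refine Finset.sum_congr rfl fun k hk => ?_
    rw [hc']
    dsimp only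
    rw [if_pos hk, smul_smul]
    congr 1
    ring
  have hb := (B.strict_proj_bound hK hnice hstrict).1
  rw [hSB, norm_smul, Real.norm_eq_abs, abs_of_pos (by linarith : (0:ℝ) < 1 + δ)] at hb
  have hvnorm : ‖v‖ ≤ nA + δ * nB := by
    rw [hvsplit]
    calc ‖(∑ k ∈ A, σc k • B.e k) + δ • ∑ k ∈ B', σc k • B.e k‖
        ≤ nA + ‖δ • ∑ k ∈ B', σc k • B.e k‖ := norm_add_le _ _
      _ = nA + δ * nB := by rw [norm_smul, Real.norm_eq_abs, abs_of_pos hδ]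
  have hKnn : 0 ≤ K := le_trans zero_le_one (B.one_le_K hK)
  nlinarith [hb, hvnorm, norm_nonneg v]

/-- Sign removal. -/
lemma sgn_bound {K : ℝ} (hK : B.QuasiGreedyWith K) {A B' : Finset ℕ} (hBA : B' ⊆ A)
    {σc : ℕ → ℝ} {t : ℝ} (ht : 0 < t) (hσ : ∀ k ∈ A, |σc k| = t) :
    t * ‖∑ k ∈ B', B.e k‖ ≤ 2 * K * ‖∑ k ∈ A, σc k • B.e k‖ := by
  set Bp := B'.filter (fun k => 0 < σc k) with hBp
  set Bm := B'.filter (fun k => ¬ 0 < σc k) with hBm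
  have hsplit : t • ∑ k ∈ B', B.e k
      = (∑ k ∈ Bp, σc k • B.e k) - (∑ k ∈ Bm, σc k • B.e k) := by
    rw [Finset.smul_sum, ← Finset.sum_filter_add_sum_filter_not B' (fun k => 0 < σc k)]
    have e1 : ∑ k ∈ Bp, t • B.e k = ∑ k ∈ Bp, σc k • B.e k := by
      refine Finset.sum_congr rfl fun k hk => ?_
      rw [Finset.mem_filter] at hk
      have := hσ k (hBA hk.1)
      rw [abs_of_pos hk.2] at this
      rw [this]
    have e2 : ∑ k ∈ Bm, t • B.e k = - ∑ k ∈ Bm, σc k • B.e k := by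
      rw [← Finset.sum_neg_distrib]
      refine Finset.sum_congr rfl fun k hk => ?_
      rw [Finset.mem_filter] at hk
      have h' := hσ k (hBA hk.1)
      rw [abs_of_nonpos (le_of_not_gt hk.2)] at h'
      have h'' : σc k = -t := by linarith
      rw [h'']
      simp
    rw [e1, e2]
    abel
  have h1 : ‖∑ k ∈ Bp, σc k • B.e k‖ ≤ K * ‖∑ k ∈ A, σc k • B.e k‖ :=
    B.ucc hK (le_trans (Finset.filter_subset _ _) hBA) ht hσ
  have h2 : ‖∑ k ∈ Bm, σc k • B.e k‖ ≤ K * ‖∑ k ∈ A, σc k • B.e k‖ :=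
    B.ucc hK (le_trans (Finset.filter_subset _ _) hBA) ht hσ
  calc t * ‖∑ k ∈ B', B.e k‖ = ‖t • ∑ k ∈ B', B.e k‖ := by
        rw [norm_smul, Real.norm_eq_abs, abs_of_pos ht]
    _ ≤ ‖∑ k ∈ Bp, σc k • B.e k‖ + ‖∑ k ∈ Bm, σc k • B.e k‖ := by
        rw [hsplit]; exact norm_sub_le _ _
    _ ≤ 2 * K * ‖∑ k ∈ A, σc k • B.e k‖ := by linarith

end QGBasis

namespace QGBasis
variable {X : Type*} [NormedAddCommGroup X] [NormedSpace ℝ X] (B : QGBasis X)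

lemma abel_identity (c : ℕ → ℝ) (g : ℕ → X) (M : ℕ) :
    ∑ m ∈ Finset.range M, c m • (g (m+1) - g m)
      = c M • g M - c 0 • g 0 - ∑ m ∈ Finset.range M, (c (m+1) - c m) • g (m+1) := by
  induction M with
  | zero => simp
  | succ M ih =>
    rw [Finset.sum_range_succ, ih,
      Finset.sum_range_succ (f := fun m => (c (m+1) - c m) • g (m+1))]
    simp only [smul_sub, sub_smul]
    abel

/-- Truncation estimate: if all coefficients on `B'` exceed `t` in modulus, then
`t‖∑_{B'} e_k‖ ≤ 4K²‖x‖`. -/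
lemma tlem {K : ℝ} (hK : B.QuasiGreedyWith K) {x : X} (hx : ∃ π, B.IsGreedyPerm x π)
    {t : ℝ} (ht : 0 < t) {B' : Finset ℕ} (hB : ∀ k ∈ B', t < |B.coeff k x|) :
    t * ‖∑ k ∈ B', B.e k‖ ≤ 4 * K^2 * ‖x‖ := by
  obtain ⟨π, hπ⟩ := hx
  have hK1 : 1 ≤ K := B.one_le_K hK
  have hxn : (0:ℝ) ≤ K * ‖x‖ := mul_nonneg (by linarith) (norm_nonneg x)
  set E := (B.finite_coeff_gt x ht).toFinset with hEdef
  have hmemE : ∀ k, k ∈ E ↔ t < |B.coeff k x| := fun k => Set.Finite.mem_toFinset _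
  have hBE : B' ⊆ E := fun k hk => (hmemE k).mpr (hB k hk)
  have hstrict : ∀ j ∈ E, ∀ i ∉ E, |B.coeff i x| < |B.coeff j x| := by
    intro j hj i hi
    have h1 := (hmemE j).mp hj
    have h2 : ¬ t < |B.coeff i x| := fun hc => hi ((hmemE i).mpr hc)
    push_neg at h2
    exact lt_of_le_of_lt h2 h1
  set M := E.card with hM
  have hpre : (Finset.range M).image π = E := B.prefix_eq_of_strict hπ hstrict
  have hmem_lt : ∀ m, m < M → t < |B.coeff (π m) x| := by
    intro m hm
    have : π m ∈ E := hpre ▸ Finset.mem_image_of_mem π (Finset.mem_range.mpr hm)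
    exact (hmemE _).mp this
  have hmem_ge : ∀ m, M ≤ m → |B.coeff (π m) x| ≤ t := by
    intro m hm
    by_contra hc
    push_neg at hc
    have : π m ∈ E := (hmemE _).mpr hc
    rw [← hpre] at this
    obtain ⟨m', hm', hmm'⟩ := Finset.mem_image.mp this
    rw [Finset.mem_range] at hm'
    have := hπ.1.1 hmm'
    omega
  set c : ℕ → ℝ := fun m => if M ≤ m then 1 else t / |B.coeff (π m) x| with hc
  have hc_pos : ∀ m, 0 < c m := by
    intro m
    rw [hc]
    dsimp only
    split
    · exact one_pos
    · next h =>
      push_neg at h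
      exact div_pos ht (lt_trans ht (hmem_lt m h))
  have hc_le : ∀ m, c m ≤ 1 := by
    intro m
    rw [hc]
    dsimp only
    split
    · exact le_refl _
    · next h =>
      push_neg at h
      exact le_of_lt ((div_lt_one (lt_trans ht (hmem_lt m h))).mpr (hmem_lt m h))
  have hc_mono : ∀ m, c m ≤ c (m+1) := by
    intro m
    rw [hc]
    dsimp only
    rcases le_or_gt M m with h | h
    · rw [if_pos h, if_pos (le_trans h (Nat.le_succ m))]
    · rw [if_neg (not_le.mpr h)]
      rcases le_or_gt M (m+1) with h2 | h2
      · rw [if_pos h2]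
        exact le_of_lt ((div_lt_one (lt_trans ht (hmem_lt m h))).mpr (hmem_lt m h))
      · rw [if_neg (not_le.mpr h2)]
        refine div_le_div_of_nonneg_left (le_of_lt ht) (lt_trans ht (hmem_lt _ h2)) ?_
        exact B.greedyPerm_anti hπ (Nat.le_succ m)
  set g : ℕ → X := fun m => B.G π m x with hg
  have hg0 : g 0 = 0 := by rw [hg]; unfold G; simp
  have hgb : ∀ m, ‖g m‖ ≤ K * ‖x‖ := fun m => (hK x π hπ m).1
  have hid : ∀ m, g (m+1) - g m = B.coeff (π m) x • B.e (π m) := by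
    intro m
    rw [hg]
    dsimp only
    unfold G
    rw [Finset.sum_range_succ]
    abel
  set w := ∑ k ∈ E, ((t / |B.coeff k x|) * B.coeff k x) • B.e k with hw
  have hwid : w = ∑ m ∈ Finset.range M, c m • (g (m+1) - g m) := by
    rw [hw, ← hpre, Finset.sum_image (fun a _ b _ h => hπ.1.1 h)]
    refine Finset.sum_congr rfl fun m hm => ?_
    rw [Finset.mem_range] at hm
    rw [hid m, smul_smul, hc]
    dsimp only
    rw [if_neg (not_le.mpr hm)]
  have hwnorm : ‖w‖ ≤ 2 * K * ‖x‖ := by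
    rw [hwid, abel_identity, hg0, smul_zero, sub_zero]
    calc ‖c M • g M - ∑ m ∈ Finset.range M, (c (m+1) - c m) • g (m+1)‖
        ≤ ‖c M • g M‖ + ‖∑ m ∈ Finset.range M, (c (m+1) - c m) • g (m+1)‖ := norm_sub_le _ _
      _ ≤ K * ‖x‖ + ∑ m ∈ Finset.range M, (c (m+1) - c m) * (K * ‖x‖) := by
          refine add_le_add ?_ ?_
          · rw [norm_smul, Real.norm_eq_abs, abs_of_pos (hc_pos M)]
            calc c M * ‖g M‖ ≤ 1 * (K * ‖x‖) :=
                  mul_le_mul (hc_le M) (hgb M) (norm_nonneg _) zero_le_one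
              _ = K * ‖x‖ := one_mul _
          · refine le_trans (norm_sum_le _ _) (Finset.sum_le_sum fun m _ => ?_)
            rw [norm_smul, Real.norm_eq_abs, abs_of_nonneg (by linarith [hc_mono m])]
            exact mul_le_mul_of_nonneg_left (hgb (m+1)) (by linarith [hc_mono m])
      _ ≤ K * ‖x‖ + K * ‖x‖ := by
          refine add_le_add (le_refl _) ?_
          rw [← Finset.sum_mul, Finset.sum_range_sub (f := fun m => c m)]
          calc (c M - c 0) * (K * ‖x‖) ≤ 1 * (K * ‖x‖) := by
                refine mul_le_mul_of_nonneg_right ?_ hxn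
                linarith [hc_pos 0, hc_le M]
            _ = K * ‖x‖ := one_mul _
      _ = 2 * K * ‖x‖ := by ring
  have hσ : ∀ k ∈ E, |t / |B.coeff k x| * B.coeff k x| = t := by
    intro k hk
    have hk' : t < |B.coeff k x| := (hmemE k).mp hk
    have hne : |B.coeff k x| ≠ 0 := ne_of_gt (lt_trans ht hk')
    rw [abs_mul, abs_div, abs_abs, abs_of_pos ht, div_mul_cancel₀ _ hne]
  have hsgn := B.sgn_bound hK hBE ht hσ
  calc t * ‖∑ k ∈ B', B.e k‖ ≤ 2 * K * ‖w‖ := hsgn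
    _ ≤ 2 * K * (2 * K * ‖x‖) := by
        refine mul_le_mul_of_nonneg_left hwnorm (by linarith)
    _ = 4 * K^2 * ‖x‖ := by ring

end QGBasis

namespace QGBasis
variable {X : Type*} [NormedAddCommGroup X] [NormedSpace ℝ X] (B : QGBasis X)

lemma layer_nonneg : ∀ (n : ℕ) (D : Finset ℕ), D.card = n → ∀ (cf : ℕ → ℝ) (M R : ℝ),
    0 ≤ M → 0 ≤ R → (∀ k ∈ D, 0 ≤ cf k ∧ cf k ≤ M) →
    (∀ A ⊆ D, ‖∑ k ∈ A, B.e k‖ ≤ R) →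
    ‖∑ k ∈ D, cf k • B.e k‖ ≤ M * R := by
  intro n
  induction n with
  | zero =>
    intro D hD cf M R hM hR hc hB
    rw [Finset.card_eq_zero] at hD
    subst hD
    simp only [Finset.sum_empty, norm_zero]
    positivity
  | succ n ih =>
    intro D hD cf M R hM hR hc hB
    have hne : D.Nonempty := Finset.card_pos.mp (by omega)
    obtain ⟨k0, hk0, hmin⟩ := D.exists_min_image cf hne
    set m := cf k0 with hm
    have hm0 : 0 ≤ m := (hc k0 hk0).1
    have hmM : m ≤ M := (hc k0 hk0).2
    have hsplit : ∑ k ∈ D, cf k • B.e k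
        = m • (∑ k ∈ D, B.e k) + ∑ k ∈ D.erase k0, (cf k - m) • B.e k := by
      have h1 : ∑ k ∈ D.erase k0, (cf k - m) • B.e k = ∑ k ∈ D, (cf k - m) • B.e k :=
        Finset.sum_erase _ (by rw [hm]; simp)
      rw [h1, Finset.smul_sum, ← Finset.sum_add_distrib]
      refine Finset.sum_congr rfl fun k _ => ?_
      rw [← add_smul]
      congr 1
      ring
    rw [hsplit]
    have h2 : ‖∑ k ∈ D.erase k0, (cf k - m) • B.e k‖ ≤ (M - m) * R := by
      refine ih (D.erase k0) ?_ _ _ _ (by linarith) hR ?_ ?_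
      · rw [Finset.card_erase_of_mem hk0, hD]
        omega
      · intro k hk
        have hkD := Finset.mem_of_mem_erase hk
        exact ⟨by linarith [hmin k hkD], by linarith [(hc k hkD).2]⟩
      · intro A hA
        exact hB A (le_trans hA (Finset.erase_subset _ _))
    calc ‖m • (∑ k ∈ D, B.e k) + ∑ k ∈ D.erase k0, (cf k - m) • B.e k‖
        ≤ ‖m • (∑ k ∈ D, B.e k)‖ + ‖∑ k ∈ D.erase k0, (cf k - m) • B.e k‖ := norm_add_le _ _
      _ ≤ m * R + (M - m) * R := by
          refine add_le_add ?_ h2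
          rw [norm_smul, Real.norm_eq_abs, abs_of_nonneg hm0]
          exact mul_le_mul_of_nonneg_left (hB D (le_refl D)) hm0
      _ = M * R := by ring

lemma layer (D : Finset ℕ) (cf : ℕ → ℝ) (M R : ℝ) (hM : 0 ≤ M) (hR : 0 ≤ R)
    (hc : ∀ k ∈ D, |cf k| ≤ M) (hB : ∀ A ⊆ D, ‖∑ k ∈ A, B.e k‖ ≤ R) :
    ‖∑ k ∈ D, cf k • B.e k‖ ≤ 2 * (M * R) := by
  set Dp := D.filter (fun k => 0 ≤ cf k) with hDp
  set Dm := D.filter (fun k => ¬ 0 ≤ cf k) with hDm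
  have hsplit : ∑ k ∈ D, cf k • B.e k
      = (∑ k ∈ Dp, cf k • B.e k) + (∑ k ∈ Dm, cf k • B.e k) :=
    (Finset.sum_filter_add_sum_filter_not D _ _).symm
  have h1 : ‖∑ k ∈ Dp, cf k • B.e k‖ ≤ M * R := by
    refine B.layer_nonneg Dp.card Dp rfl cf M R hM hR ?_ ?_
    · intro k hk
      rw [hDp, Finset.mem_filter] at hk
      exact ⟨hk.2, le_trans (le_abs_self _) (hc k hk.1)⟩
    · intro A hA
      exact hB A (le_trans hA (Finset.filter_subset _ _))
  have h2 : ‖∑ k ∈ Dm, cf k • B.e k‖ ≤ M * R := by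
    have hneg : ∑ k ∈ Dm, cf k • B.e k = - ∑ k ∈ Dm, (-(cf k)) • B.e k := by
      rw [← Finset.sum_neg_distrib]
      refine Finset.sum_congr rfl fun k _ => ?_
      rw [neg_smul, neg_neg]
    rw [hneg, norm_neg]
    refine B.layer_nonneg Dm.card Dm rfl _ M R hM hR ?_ ?_
    · intro k hk
      rw [hDm, Finset.mem_filter] at hk
      constructor
      · linarith [hk.2]
      · calc -(cf k) ≤ |cf k| := neg_le_abs _
          _ ≤ M := hc k hk.1
    · intro A hA
      exact hB A (le_trans hA (Finset.filter_subset _ _))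
  calc ‖∑ k ∈ D, cf k • B.e k‖ ≤ ‖∑ k ∈ Dp, cf k • B.e k‖ + ‖∑ k ∈ Dm, cf k • B.e k‖ := by
        rw [hsplit]; exact norm_add_le _ _
    _ ≤ 2 * (M * R) := by linarith

/-- Logarithmic bound for arbitrary coordinate projections of order `N`. -/
lemma condlog {K : ℝ} (hK : B.QuasiGreedyWith K) {y : X} (hy : ∃ π, B.IsGreedyPerm y π)
    {D : Finset ℕ} {N : ℕ} (hD : D.card ≤ N) (hN : 1 ≤ N) :
    ‖B.S D y‖ ≤ (16 * K^2 * (Nat.log2 N + 1) + K * B.C_norm / B.c_norm) * ‖y‖ := by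
  have hK1 : 1 ≤ K := B.one_le_K hK
  have hCc : 0 < K * B.C_norm / B.c_norm := by
    have h0 : (0:ℝ) < B.C_norm := lt_of_lt_of_le B.c_norm_pos (le_trans (B.norm_e_ge 0) (B.norm_e_le 0))
    have := B.c_norm_pos
    positivity
  rcases eq_or_lt_of_le (norm_nonneg y) with hy0 | hy0
  · -- y = 0
    have : y = 0 := by rw [← norm_eq_zero]; exact hy0.symm
    subst this
    have : B.S D 0 = 0 := by
      unfold S
      refine Finset.sum_eq_zero fun k _ => ?_
      rw [B.coeff_zero, zero_smul]
    simp [this]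
  set b := K * ‖y‖ / B.c_norm with hb
  have hbpos : 0 < b := by
    rw [hb]
    have := B.c_norm_pos
    positivity
  obtain ⟨π, hπ⟩ := hy
  have hble : ∀ k, |B.coeff k y| ≤ b := by
    intro k
    rw [hb, le_div_iff₀ B.c_norm_pos, mul_comm]
    exact B.abs_coeff_le hK hπ k
  set J := Nat.log2 N + 1 with hJ
  have hNJ : (N:ℝ) < 2^J := by
    have h2 := Nat.lt_log2_self (n := N)
    calc (N:ℝ) < ((2^(Nat.log2 N + 1) : ℕ) : ℝ) := by exact_mod_cast h2
      _ = 2^J := by rw [hJ]; push_cast; ring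
  set Dj : ℕ → Finset ℕ := fun j =>
    D.filter (fun k => b / 2^(j+1) < |B.coeff k y| ∧ |B.coeff k y| ≤ b / 2^j) with hDj
  set Dtail := D.filter (fun k => |B.coeff k y| ≤ b / 2^J) with hDtail
  have hcover : D.filter (fun k => ¬ |B.coeff k y| ≤ b / 2^J)
      = (Finset.range J).biUnion Dj := by
    ext k
    simp only [Finset.mem_filter, Finset.mem_biUnion, Finset.mem_range, hDj]
    constructor
    · rintro ⟨hkD, hk⟩
      push_neg at hk
      have hex : ∃ j, ¬ |B.coeff k y| ≤ b / 2^j := by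
        refine ⟨J, ?_⟩
        push_neg
        exact hk
      set j0 := Nat.find hex with hj0
      have hj0spec : ¬ |B.coeff k y| ≤ b / 2^j0 := Nat.find_spec hex
      have hj0pos : 0 < j0 := by
        rcases Nat.eq_zero_or_pos j0 with h | h
        · exfalso
          rw [h] at hj0spec
          simp only [pow_zero, div_one] at hj0spec
          exact hj0spec (hble k)
        · exact h
      have hj0le : j0 ≤ J := Nat.find_le (not_le.mpr hk)
      refine ⟨j0 - 1, by omega, hkD, ?_, ?_⟩
      · have he : j0 - 1 + 1 = j0 := by omega
        rw [he]
        push_neg at hj0spec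
        exact hj0spec
      · have := Nat.find_min hex (m := j0 - 1) (by omega)
        push_neg at this
        exact this
    · rintro ⟨j, hjJ, hkD, hlow, hhigh⟩
      refine ⟨hkD, ?_⟩
      push_neg
      calc b / 2^J ≤ b / 2^(j+1) := by
            refine div_le_div_of_nonneg_left (le_of_lt hbpos) (by positivity) ?_
            exact pow_le_pow_right₀ one_le_two (by omega)
        _ < |B.coeff k y| := hlow
  have hdisj0 : ∀ j1 j2, j1 < j2 → Disjoint (Dj j1) (Dj j2) := by
    intro j1 j2 h
    rw [Finset.disjoint_left]
    intro k hk1 hk2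
    rw [hDj, Finset.mem_filter] at hk1 hk2
    have h1 : |B.coeff k y| ≤ b / 2^j2 := hk2.2.2
    have h2 : b / 2^(j1+1) < |B.coeff k y| := hk1.2.1
    have h3 : b / 2^j2 ≤ b / 2^(j1+1) := by
      refine div_le_div_of_nonneg_left (le_of_lt hbpos) (by positivity) ?_
      exact pow_le_pow_right₀ one_le_two (by omega)
    linarith
  have hdisj : ∀ j1 ∈ Finset.range J, ∀ j2 ∈ Finset.range J, j1 ≠ j2 →
      Disjoint (Dj j1) (Dj j2) := by
    intro j1 _ j2 _ hne
    rcases lt_or_gt_of_ne hne with h | h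
    · exact hdisj0 _ _ h
    · exact (hdisj0 _ _ h).symm
  have hSsplit : B.S D y = (∑ k ∈ Dtail, B.coeff k y • B.e k)
      + ∑ j ∈ Finset.range J, ∑ k ∈ Dj j, B.coeff k y • B.e k := by
    unfold S
    rw [← Finset.sum_biUnion hdisj, ← hcover]
    exact (Finset.sum_filter_add_sum_filter_not D _ _).symm
  have htail : ‖∑ k ∈ Dtail, B.coeff k y • B.e k‖ ≤ K * B.C_norm / B.c_norm * ‖y‖ := by
    have h1 : ‖∑ k ∈ Dtail, B.coeff k y • B.e k‖ ≤ Dtail.card * (b / 2^J * B.C_norm) := by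
      refine B.norm_finsum_le Dtail _ _ fun k hk => ?_
      rw [hDtail, Finset.mem_filter] at hk
      exact hk.2
    have h2 : (Dtail.card : ℝ) ≤ N := by
      have hsub : Dtail ⊆ D := by rw [hDtail]; exact Finset.filter_subset _ D
      have := Finset.card_le_card hsub
      calc (Dtail.card : ℝ) ≤ (D.card : ℝ) := by exact_mod_cast this
        _ ≤ N := by exact_mod_cast hD
    have h3 : (Dtail.card : ℝ) * (b / 2^J * B.C_norm) ≤ 2^J * (b / 2^J * B.C_norm) := by
      refine mul_le_mul_of_nonneg_right (le_trans h2 (le_of_lt hNJ)) ?_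
      have h0 : (0:ℝ) < B.C_norm := lt_of_lt_of_le B.c_norm_pos (le_trans (B.norm_e_ge 0) (B.norm_e_le 0))
      positivity
    have h4 : (2:ℝ)^J * (b / 2^J * B.C_norm) = b * B.C_norm := by
      field_simp
    have h5 : b * B.C_norm = K * B.C_norm / B.c_norm * ‖y‖ := by
      rw [hb]
      field_simp
    linarith
  have hpiece : ∀ j ∈ Finset.range J, ‖∑ k ∈ Dj j, B.coeff k y • B.e k‖ ≤ 16 * K^2 * ‖y‖ := by
    intro j _
    have htj : (0:ℝ) < b / 2^(j+1) := by positivity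
    have hRnn : (0:ℝ) ≤ 4 * K^2 * ‖y‖ / (b / 2^(j+1)) := by positivity
    have h1 : ‖∑ k ∈ Dj j, B.coeff k y • B.e k‖
        ≤ 2 * ((b / 2^j) * (4 * K^2 * ‖y‖ / (b / 2^(j+1)))) := by
      refine B.layer (Dj j) _ _ _ (by positivity) hRnn ?_ ?_
      · intro k hk
        rw [hDj, Finset.mem_filter] at hk
        exact hk.2.2
      · intro A hA
        have h2 := B.tlem hK ⟨π, hπ⟩ htj (B' := A) ?_
        · rw [le_div_iff₀ htj, mul_comm]
          exact h2
        · intro k hk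
          have := hA hk
          rw [hDj, Finset.mem_filter] at this
          exact this.2.1
    have h3 : 2 * ((b / 2^j) * (4 * K^2 * ‖y‖ / (b / 2^(j+1)))) = 16 * K^2 * ‖y‖ := by
      have hb' : b ≠ 0 := ne_of_gt hbpos
      have h2j : (2:ℝ)^j ≠ 0 := by positivity
      field_simp
      ring
    linarith
  calc ‖B.S D y‖ ≤ ‖∑ k ∈ Dtail, B.coeff k y • B.e k‖
        + ‖∑ j ∈ Finset.range J, ∑ k ∈ Dj j, B.coeff k y • B.e k‖ := by
        rw [hSsplit]; exact norm_add_le _ _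
    _ ≤ K * B.C_norm / B.c_norm * ‖y‖ + ∑ j ∈ Finset.range J, 16 * K^2 * ‖y‖ := by
        refine add_le_add htail (le_trans (norm_sum_le _ _) (Finset.sum_le_sum hpiece))
    _ = (16 * K^2 * (Nat.log2 N + 1) + K * B.C_norm / B.c_norm) * ‖y‖ := by
        rw [Finset.sum_const, Finset.card_range, nsmul_eq_mul, hJ]
        push_cast
        ring

end QGBasis

namespace QGBasis
variable {X : Type*} [NormedAddCommGroup X] [NormedSpace ℝ X] (B : QGBasis X)

lemma nice_dichotomy {x : X} {π : ℕ → ℕ} (hπ : B.IsGreedyPerm x π) {j0 : ℕ}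
    (hj0 : B.coeff j0 x = 0) : {j | B.coeff j x ≠ 0}.Finite := by
  obtain ⟨m, hm⟩ := hπ.1.2 j0
  refine ((Set.finite_Iio m).image π).subset fun i hi => ?_
  rw [Set.mem_setOf_eq] at hi
  obtain ⟨p, hp⟩ := hπ.1.2 i
  have hpm : p < m := by
    by_contra hc
    push_neg at hc
    have h1 : |B.coeff (π p) x| ≤ |B.coeff (π m) x| := B.greedyPerm_anti hπ hc
    rw [hm, hj0, hp] at h1
    simp only [abs_zero] at h1
    exact hi (abs_eq_zero.mp (le_antisymm h1 (abs_nonneg _)))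
  exact ⟨p, hpm, hp⟩

lemma coeff_u (x : X) (Γ : Finset ℕ) (zc : ℕ → ℝ) (j : ℕ) :
    B.coeff j (x - ∑ k ∈ Γ, zc k • B.e k)
      = B.coeff j x - (if j ∈ Γ then zc j else 0) := by
  rw [B.coeff_sub, B.coeff_finsum]

/-- Perturbation: `x - z` can be perturbed on a subset of `Γ` into a vector
admitting a greedy permutation, for every `δ > 0`. -/
lemma pert {x : X} (hx : ∃ π, B.IsGreedyPerm x π) (Γ : Finset ℕ) (zc : ℕ → ℝ) :
    ∃ F : Finset ℕ, F ⊆ Γ ∧ ∀ δ : ℝ, 0 < δ →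
      ∃ πv, B.IsGreedyPerm
        ((x - ∑ k ∈ Γ, zc k • B.e k) + ∑ k ∈ F, δ • B.e k) πv := by
  obtain ⟨π, hπ⟩ := hx
  set u := x - ∑ k ∈ Γ, zc k • B.e k with hu
  by_cases hzero : ∃ j0, B.coeff j0 x = 0
  · -- finitely many nonzero coefficients
    obtain ⟨j0, hj0⟩ := hzero
    have hfin := B.nice_dichotomy hπ hj0
    refine ⟨∅, Finset.empty_subset _, fun δ hδ => ?_⟩
    simp only [Finset.sum_empty, add_zero]
    refine B.nice_of_finite_support u ((hfin.union Γ.finite_toSet).subset fun j hj => ?_)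
    rw [Set.mem_setOf_eq, hu, B.coeff_u] at hj
    by_cases hjΓ : j ∈ Γ
    · exact Or.inr hjΓ
    · rw [if_neg hjΓ, sub_zero] at hj
      exact Or.inl hj
  · push_neg at hzero
    set F := Γ.filter (fun j => B.coeff j u = 0) with hF
    refine ⟨F, Finset.filter_subset _ _, fun δ hδ => ?_⟩
    refine B.nice_of_forall_ne _ fun j => ?_
    have hcv : B.coeff j (u + ∑ k ∈ F, δ • B.e k)
        = B.coeff j u + (if j ∈ F then δ else 0) := by
      rw [B.coeff_add, B.coeff_finsum]
    rw [hcv]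
    by_cases hjF : j ∈ F
    · have hjF' := hjF
      rw [hF, Finset.mem_filter] at hjF'
      rw [if_pos hjF, hjF'.2, zero_add]
      exact ne_of_gt hδ
    · rw [if_neg hjF, add_zero]
      by_cases hjΓ : j ∈ Γ
      · intro hc
        exact hjF (by rw [hF, Finset.mem_filter]; exact ⟨hjΓ, hc⟩)
      · rw [hu, B.coeff_u, if_neg hjΓ, sub_zero]
        exact hzero j

lemma norm_pert_le (F : Finset ℕ) (Γ : Finset ℕ) (hF : F ⊆ Γ) {δ : ℝ} (hδ : 0 < δ) :
    ‖∑ k ∈ F, δ • B.e k‖ ≤ δ * (Γ.card * B.C_norm) := by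
  have h1 : ‖∑ k ∈ F, δ • B.e k‖ ≤ F.card * (δ * B.C_norm) :=
    B.norm_finsum_le F (fun _ => δ) δ (fun k _ => le_of_eq (abs_of_pos hδ))
  have h2 : (F.card : ℝ) ≤ Γ.card := by exact_mod_cast Finset.card_le_card hF
  have hC : (0:ℝ) < B.C_norm := lt_of_lt_of_le B.c_norm_pos (le_trans (B.norm_e_ge 0) (B.norm_e_le 0))
  calc ‖∑ k ∈ F, δ • B.e k‖ ≤ F.card * (δ * B.C_norm) := h1
    _ ≤ Γ.card * (δ * B.C_norm) := by
        refine mul_le_mul_of_nonneg_right h2 ?_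
        positivity
    _ = δ * (Γ.card * B.C_norm) := by ring

/-- `condlog` for vectors of the form `x - z`, `z` supported on `Γ`. -/
lemma condlog_u {K : ℝ} (hK : B.QuasiGreedyWith K) {x : X} (hx : ∃ π, B.IsGreedyPerm x π)
    (Γ : Finset ℕ) (zc : ℕ → ℝ) {D : Finset ℕ} {N : ℕ} (hD : D.card ≤ N) (hN : 1 ≤ N) :
    ‖B.S D (x - ∑ k ∈ Γ, zc k • B.e k)‖
      ≤ (16 * K^2 * (Nat.log2 N + 1) + K * B.C_norm / B.c_norm)
        * ‖x - ∑ k ∈ Γ, zc k • B.e k‖ := by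
  set u := x - ∑ k ∈ Γ, zc k • B.e k with hu
  set CL := 16 * K^2 * ((Nat.log2 N : ℝ) + 1) + K * B.C_norm / B.c_norm with hCL
  have hK1 : 1 ≤ K := B.one_le_K hK
  have hCc : 0 < B.C_norm := lt_of_lt_of_le B.c_norm_pos (le_trans (B.norm_e_ge 0) (B.norm_e_le 0))
  have hCL0 : 0 ≤ CL := by
    rw [hCL]
    have := B.c_norm_pos
    positivity
  obtain ⟨F, hFΓ, hnice⟩ := B.pert hx Γ zc
  refine le_of_forall_pos_mul
    (C := CL * (Γ.card * B.C_norm) + Γ.card * B.C_norm) fun δ hδ => ?_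
  obtain ⟨πv, hπv⟩ := hnice δ hδ
  set v := u + ∑ k ∈ F, δ • B.e k with hv
  have hSv : B.S D u = B.S D v - B.S D (∑ k ∈ F, δ • B.e k) := by
    have : u = v - ∑ k ∈ F, δ • B.e k := by rw [hv]; abel
    rw [this, B.S_sub]
  have h1 : ‖B.S D (∑ k ∈ F, δ • B.e k)‖ ≤ δ * (Γ.card * B.C_norm) := by
    rw [B.S_finsum]
    refine le_trans ?_ (B.norm_pert_le (D ∩ F) Γ
      (le_trans (Finset.inter_subset_right) hFΓ) hδ)
    exact le_refl _
  have h2 : ‖B.S D v‖ ≤ CL * ‖v‖ := B.condlog hK ⟨πv, hπv⟩ hD hN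
  have h3 : ‖v‖ ≤ ‖u‖ + δ * (Γ.card * B.C_norm) := by
    rw [hv]
    exact le_trans (norm_add_le _ _) (by linarith [B.norm_pert_le F Γ hFΓ hδ])
  calc ‖B.S D u‖ ≤ ‖B.S D v‖ + ‖B.S D (∑ k ∈ F, δ • B.e k)‖ := by
        rw [hSv]; exact norm_sub_le _ _
    _ ≤ CL * (‖u‖ + δ * (Γ.card * B.C_norm)) + δ * (Γ.card * B.C_norm) := by
        refine add_le_add (le_trans h2 (mul_le_mul_of_nonneg_left h3 hCL0)) h1
    _ = CL * ‖u‖ + δ * (CL * (Γ.card * B.C_norm) + Γ.card * B.C_norm) := by ring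

/-- `tlem` for vectors of the form `x - z`, on index sets avoiding `Γ`. -/
lemma tlem_u {K : ℝ} (hK : B.QuasiGreedyWith K) {x : X} (hx : ∃ π, B.IsGreedyPerm x π)
    (Γ : Finset ℕ) (zc : ℕ → ℝ) {t : ℝ} (ht : 0 < t) {B' : Finset ℕ}
    (hB'Γ : ∀ k ∈ B', k ∉ Γ)
    (hB : ∀ k ∈ B', t < |B.coeff k (x - ∑ k ∈ Γ, zc k • B.e k)|) :
    t * ‖∑ k ∈ B', B.e k‖ ≤ 4 * K^2 * ‖x - ∑ k ∈ Γ, zc k • B.e k‖ := by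
  set u := x - ∑ k ∈ Γ, zc k • B.e k with hu
  have hK1 : 1 ≤ K := B.one_le_K hK
  obtain ⟨F, hFΓ, hnice⟩ := B.pert hx Γ zc
  refine le_of_forall_pos_mul (C := 4 * K^2 * (Γ.card * B.C_norm)) fun δ hδ => ?_
  obtain ⟨πv, hπv⟩ := hnice δ hδ
  set v := u + ∑ k ∈ F, δ • B.e k with hv
  have hcoeffv : ∀ k ∈ B', B.coeff k v = B.coeff k u := by
    intro k hk
    rw [hv, B.coeff_add, B.coeff_finsum, if_neg (fun hc => hB'Γ k hk (hFΓ hc)), add_zero]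
  have h1 : t * ‖∑ k ∈ B', B.e k‖ ≤ 4 * K^2 * ‖v‖ := by
    refine B.tlem hK ⟨πv, hπv⟩ ht fun k hk => ?_
    rw [hcoeffv k hk]
    exact hB k hk
  have h3 : ‖v‖ ≤ ‖u‖ + δ * (Γ.card * B.C_norm) := by
    rw [hv]
    exact le_trans (norm_add_le _ _) (by linarith [B.norm_pert_le F Γ hFΓ hδ])
  calc t * ‖∑ k ∈ B', B.e k‖ ≤ 4 * K^2 * ‖v‖ := h1
    _ ≤ 4 * K^2 * (‖u‖ + δ * (Γ.card * B.C_norm)) := by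
        refine mul_le_mul_of_nonneg_left h3 (by positivity)
    _ = 4 * K^2 * ‖u‖ + δ * (4 * K^2 * (Γ.card * B.C_norm)) := by ring

end QGBasis

namespace QGBasis
variable {X : Type*} [NormedAddCommGroup X] [NormedSpace ℝ X] (B : QGBasis X)

lemma norm_ones_le (Γ : Finset ℕ) : ‖∑ k ∈ Γ, B.e k‖ ≤ Γ.card * (1 * B.C_norm) := by
  have h : ∑ k ∈ Γ, B.e k = ∑ k ∈ Γ, (1:ℝ) • B.e k := by simp
  rw [h]
  exact B.norm_finsum_le Γ _ 1 (fun k _ => by norm_num)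

lemma hr_bddAbove (k : ℕ) :
    BddAbove {r | ∃ Γ : Finset ℕ, Γ.card = k ∧ r = ‖∑ k ∈ Γ, B.e k‖} := by
  refine ⟨k * (1 * B.C_norm), fun r hr => ?_⟩
  obtain ⟨Γ, hΓ, hrr⟩ := hr
  rw [hrr, ← hΓ]
  exact B.norm_ones_le Γ

lemma hr_set_nonempty (k : ℕ) :
    {r | ∃ Γ : Finset ℕ, Γ.card = k ∧ r = ‖∑ k ∈ Γ, B.e k‖}.Nonempty :=
  ⟨‖∑ j ∈ Finset.range k, B.e j‖, Finset.range k, Finset.card_range k, rfl⟩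

lemma le_hr {Γ : Finset ℕ} {k : ℕ} (h : Γ.card = k) : ‖∑ j ∈ Γ, B.e j‖ ≤ B.hr k :=
  le_csSup (B.hr_bddAbove k) ⟨Γ, h, rfl⟩

lemma hl_le {Γ : Finset ℕ} {k : ℕ} (h : Γ.card = k) : B.hl k ≤ ‖∑ j ∈ Γ, B.e j‖ :=
  csInf_le ⟨0, fun r hr => by obtain ⟨Γ', _, hrr⟩ := hr; rw [hrr]; exact norm_nonneg _⟩
    ⟨Γ, h, rfl⟩

lemma hl_pos {K : ℝ} (hK : B.QuasiGreedyWith K) {k : ℕ} (hk : 1 ≤ k) :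
    B.c_norm / K ≤ B.hl k := by
  have hK1 : 1 ≤ K := B.one_le_K hK
  refine le_csInf (B.hr_set_nonempty k) fun r hr => ?_
  obtain ⟨Γ, hΓ, hrr⟩ := hr
  have hne : Γ.Nonempty := Finset.card_pos.mp (by omega)
  obtain ⟨j, hj⟩ := hne
  have h1 : ‖∑ i ∈ ({j} : Finset ℕ), (1:ℝ) • B.e i‖ ≤ K * ‖∑ i ∈ Γ, (1:ℝ) • B.e i‖ :=
    B.ucc hK (Finset.singleton_subset_iff.mpr hj) one_pos (fun _ _ => abs_one)
  simp only [Finset.sum_singleton, one_smul] at h1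
  have h3 := B.norm_e_ge j
  rw [hrr, div_le_iff₀ (by linarith : (0:ℝ) < K)]
  calc B.c_norm ≤ ‖B.e j‖ := h3
    _ ≤ K * ‖∑ i ∈ Γ, B.e i‖ := h1
    _ = ‖∑ i ∈ Γ, B.e i‖ * K := by ring

lemma hl_pos' {K : ℝ} (hK : B.QuasiGreedyWith K) {k : ℕ} (hk : 1 ≤ k) : 0 < B.hl k := by
  have hK1 : 1 ≤ K := B.one_le_K hK
  have := B.hl_pos hK hk
  have h2 : (0:ℝ) < B.c_norm / K := div_pos B.c_norm_pos (by linarith)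
  linarith

lemma mu_bddAbove (N : ℕ) : BddAbove {r | ∃ k, 1 ≤ k ∧ k ≤ N ∧ r = B.hr k / B.hl k} := by
  refine Set.Finite.bddAbove (Set.Finite.subset
    ((Set.finite_Icc 1 N).image (fun k => B.hr k / B.hl k)) ?_)
  rintro r ⟨k, h1, h2, h3⟩
  exact ⟨k, Set.mem_Icc.mpr ⟨h1, h2⟩, h3.symm⟩

lemma le_mu {N k : ℕ} (h1 : 1 ≤ k) (h2 : k ≤ N) : B.hr k / B.hl k ≤ B.mu N :=
  le_csSup (B.mu_bddAbove N) ⟨k, h1, h2, rfl⟩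

lemma mu_ge_one {K : ℝ} (hK : B.QuasiGreedyWith K) {N : ℕ} (hN : 1 ≤ N) : 1 ≤ B.mu N := by
  have hpos := B.hl_pos' hK (le_refl 1)
  have h1 : B.hl 1 ≤ ‖∑ j ∈ ({0} : Finset ℕ), B.e j‖ := B.hl_le (by simp)
  have h2 : ‖∑ j ∈ ({0} : Finset ℕ), B.e j‖ ≤ B.hr 1 := B.le_hr (by simp)
  have h3 : (1:ℝ) ≤ B.hr 1 / B.hl 1 := by
    rw [le_div_iff₀ hpos, one_mul]
    linarith
  exact le_trans h3 (B.le_mu (le_refl 1) hN)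

lemma hr_le_mu_hl {K : ℝ} (hK : B.QuasiGreedyWith K) {N k : ℕ} (h1 : 1 ≤ k) (h2 : k ≤ N) :
    B.hr k ≤ B.mu N * B.hl k := by
  have hpos := B.hl_pos' hK h1
  have := B.le_mu (N := N) h1 h2
  rw [div_le_iff₀ hpos] at this
  linarith

end QGBasis

namespace QGBasis
variable {X : Type*} [NormedAddCommGroup X] [NormedSpace ℝ X] (B : QGBasis X)

/-- The main Lebesgue-type inequality:
`‖x - G_N x‖ ≤ (1 + 2·C_log(N) + 16K²μ(N)) ‖x - z‖` for any `z` with `≤ N` terms. -/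
lemma main_lebesgue {K : ℝ} (hK : B.QuasiGreedyWith K) {x : X} {π : ℕ → ℕ}
    (hπ : B.IsGreedyPerm x π) {N : ℕ} (hN : 1 ≤ N) (Γ : Finset ℕ) (hΓ : Γ.card ≤ N)
    (zc : ℕ → ℝ) :
    ‖x - B.G π N x‖ ≤ (1 + 2 * (16 * K^2 * (Nat.log2 N + 1) + K * B.C_norm / B.c_norm)
        + 16 * K^2 * B.mu N) * ‖x - ∑ k ∈ Γ, zc k • B.e k‖ := by
  have hK1 : 1 ≤ K := B.one_le_K hK
  have hCc : 0 < B.C_norm := lt_of_lt_of_le B.c_norm_pos (le_trans (B.norm_e_ge 0) (B.norm_e_le 0))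
  have hmu1 : 1 ≤ B.mu N := B.mu_ge_one hK hN
  set z := ∑ k ∈ Γ, zc k • B.e k with hz
  set u := x - z with hu
  set A := (Finset.range N).image π with hA
  have hAcard : A.card = N := by
    rw [hA, Finset.card_image_of_injective _ hπ.1.1, Finset.card_range]
  -- the algebraic identity
  have hGS : B.G π N x = B.S A x := B.G_eq_S hπ.1.1 N x
  have hSz : ∀ D : Finset ℕ, B.S D z = ∑ k ∈ D ∩ Γ, zc k • B.e k := fun D => B.S_finsum D Γ zc
  have hSu : ∀ D : Finset ℕ, B.S D u = B.S D x - B.S D z := fun D => B.S_sub D x z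
  have hzsplit : z = (∑ k ∈ A ∩ Γ, zc k • B.e k) + ∑ k ∈ Γ \ A, zc k • B.e k := by
    rw [hz, ← Finset.sum_inter_add_sum_sdiff Γ A (fun k => zc k • B.e k), Finset.inter_comm]
  have hiden : x - B.G π N x = u - B.S A u - B.S (Γ \ A) u + B.S (Γ \ A) x := by
    rw [hGS]
    have e1 : B.S A x = B.S A u + B.S A z := by rw [hSu]; abel
    have e2 : B.S (Γ \ A) z = B.S (Γ \ A) x - B.S (Γ \ A) u := by rw [hSu]; abel
    have e3 : B.S (Γ \ A) z = ∑ k ∈ Γ \ A, zc k • B.e k := by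
      rw [hSz]
      congr 1
      rw [Finset.inter_eq_left]
      exact Finset.sdiff_subset
    have e4 : x = u + z := by rw [hu]; abel
    calc x - B.S A x = u + z - (B.S A u + B.S A z) := by rw [← e4, e1]
      _ = u - B.S A u + (z - B.S A z) := by abel
      _ = u - B.S A u + B.S (Γ \ A) z := by
          congr 1
          rw [e3, hSz A, hzsplit]
          abel
      _ = u - B.S A u - B.S (Γ \ A) u + B.S (Γ \ A) x := by rw [e2]; abel
  set CL := 16 * K^2 * ((Nat.log2 N : ℝ) + 1) + K * B.C_norm / B.c_norm with hCL
  have h1 : ‖B.S A u‖ ≤ CL * ‖u‖ := B.condlog_u hK ⟨π, hπ⟩ Γ zc (le_of_eq hAcard) hN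
  have h2 : ‖B.S (Γ \ A) u‖ ≤ CL * ‖u‖ :=
    B.condlog_u hK ⟨π, hπ⟩ Γ zc
      (le_trans (Finset.card_le_card Finset.sdiff_subset) hΓ) hN
  -- the democracy estimate for S_{Γ\A} x
  have h3 : ‖B.S (Γ \ A) x‖ ≤ 16 * K^2 * B.mu N * ‖u‖ := by
    set τ := |B.coeff (π (N-1)) x| with hτ
    have hτin : ∀ k ∈ A, τ ≤ |B.coeff k x| := by
      intro k hk
      rw [hA] at hk
      obtain ⟨m, hm, hmk⟩ := Finset.mem_image.mp hk
      rw [Finset.mem_range] at hm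
      rw [← hmk, hτ]
      exact B.greedyPerm_anti hπ (by omega)
    have hτout : ∀ k, k ∉ A → |B.coeff k x| ≤ τ := by
      intro k hk
      obtain ⟨p, hp⟩ := hπ.1.2 k
      have hpN : N ≤ p := by
        by_contra hc
        push_neg at hc
        exact hk (hA ▸ (hp ▸ Finset.mem_image_of_mem π (Finset.mem_range.mpr hc)))
      rw [← hp, hτ]
      exact B.greedyPerm_anti hπ (by omega)
    rcases eq_or_lt_of_le (abs_nonneg (B.coeff (π (N-1)) x)) with hτ0 | hτ0
    · -- τ = 0 : all coefficients outside A vanish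
      have : B.S (Γ \ A) x = 0 := by
        unfold S
        refine Finset.sum_eq_zero fun k hk => ?_
        have hknA : k ∉ A := (Finset.mem_sdiff.mp hk).2
        have := hτout k hknA
        rw [hτ, ← hτ0] at this
        rw [abs_eq_zero.mp (le_antisymm this (abs_nonneg _)), zero_smul]
      rw [this, norm_zero]
      positivity
    · -- τ > 0
      rw [← hτ] at hτ0
      -- every subset of Γ \ A has small `1`-norm
      have hsub : ∀ A' ⊆ Γ \ A, ‖∑ k ∈ A', B.e k‖
          ≤ B.mu N * (4 * K^2 * ‖u‖ / (τ / 2)) := by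
        intro A' hA'
        rcases Finset.eq_empty_or_nonempty A' with hA'e | hA'ne
        · subst hA'e
          simp only [Finset.sum_empty, norm_zero]
          positivity
        · set k' := A'.card with hk'
          have hk'1 : 1 ≤ k' := Finset.card_pos.mpr hA'ne
          have hk'N : k' ≤ N :=
            le_trans (Finset.card_le_card (le_trans hA' Finset.sdiff_subset)) hΓ
          -- find a matching subset of A \ Γ
          have hcard : k' ≤ (A \ Γ).card := by
            have c1 : (Γ \ A).card + (Γ ∩ A).card = Γ.card :=
              Finset.card_sdiff_add_card_inter Γ A
            have c2 : (A \ Γ).card + (A ∩ Γ).card = A.card :=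
              Finset.card_sdiff_add_card_inter A Γ
            have c3 : (Γ ∩ A).card = (A ∩ Γ).card := by rw [Finset.inter_comm]
            have c4 : k' ≤ (Γ \ A).card := Finset.card_le_card hA'
            omega
          obtain ⟨B'', hB''sub, hB''card⟩ := Finset.exists_subset_card_eq hcard
          have hstep1 : ‖∑ k ∈ A', B.e k‖ ≤ B.hr k' := B.le_hr rfl
          have hstep2 : B.hr k' ≤ B.mu N * B.hl k' := B.hr_le_mu_hl hK hk'1 hk'N
          have hstep3 : B.hl k' ≤ ‖∑ k ∈ B'', B.e k‖ := B.hl_le hB''card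
          have hstep4 : (τ/2) * ‖∑ k ∈ B'', B.e k‖ ≤ 4 * K^2 * ‖u‖ := by
            refine B.tlem_u hK ⟨π, hπ⟩ Γ zc (by linarith) ?_ ?_
            · intro k hk
              exact (Finset.mem_sdiff.mp (hB''sub hk)).2
            · intro k hk
              have hkA : k ∈ A := (Finset.mem_sdiff.mp (hB''sub hk)).1
              have hkΓ : k ∉ Γ := (Finset.mem_sdiff.mp (hB''sub hk)).2
              rw [B.coeff_u, if_neg hkΓ, sub_zero]
              calc τ / 2 < τ := by linarith
                _ ≤ |B.coeff k x| := hτin k hkA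
          have hstep5 : ‖∑ k ∈ B'', B.e k‖ ≤ 4 * K^2 * ‖u‖ / (τ/2) := by
            rw [le_div_iff₀ (by linarith : (0:ℝ) < τ/2)]
            calc ‖∑ k ∈ B'', B.e k‖ * (τ/2) = (τ/2) * ‖∑ k ∈ B'', B.e k‖ := by ring
              _ ≤ 4 * K^2 * ‖u‖ := hstep4
          calc ‖∑ k ∈ A', B.e k‖ ≤ B.mu N * B.hl k' := le_trans hstep1 hstep2
            _ ≤ B.mu N * ‖∑ k ∈ B'', B.e k‖ :=
                mul_le_mul_of_nonneg_left hstep3 (by linarith)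
            _ ≤ B.mu N * (4 * K^2 * ‖u‖ / (τ/2)) :=
                mul_le_mul_of_nonneg_left hstep5 (by linarith)
      have hlayer : ‖B.S (Γ \ A) x‖
          ≤ 2 * (τ * (B.mu N * (4 * K^2 * ‖u‖ / (τ / 2)))) := by
        refine B.layer (Γ \ A) _ τ _ (le_of_lt hτ0) (by positivity) ?_ hsub
        intro k hk
        exact hτout k (Finset.mem_sdiff.mp hk).2
      have heq : 2 * (τ * (B.mu N * (4 * K^2 * ‖u‖ / (τ / 2)))) = 16 * K^2 * B.mu N * ‖u‖ := by
        field_simp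
        ring
      linarith
  calc ‖x - B.G π N x‖ = ‖u - B.S A u - B.S (Γ \ A) u + B.S (Γ \ A) x‖ := by rw [hiden]
    _ ≤ ‖u‖ + ‖B.S A u‖ + ‖B.S (Γ \ A) u‖ + ‖B.S (Γ \ A) x‖ := by
        refine le_trans (norm_add_le _ _) ?_
        have := norm_sub_le (u - B.S A u) (B.S (Γ \ A) u)
        have := norm_sub_le u (B.S A u)
        linarith [norm_sub_le (u - B.S A u) (B.S (Γ \ A) u), norm_sub_le u (B.S A u)]
    _ ≤ ‖u‖ + CL * ‖u‖ + CL * ‖u‖ + 16 * K^2 * B.mu N * ‖u‖ := by linarith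
    _ = (1 + 2 * CL + 16 * K^2 * B.mu N) * ‖u‖ := by ring

end QGBasis

namespace QGBasis
variable {X : Type*} [NormedAddCommGroup X] [NormedSpace ℝ X] (B : QGBasis X)

lemma le_mul_csInf {C : ℝ} (hC : 0 < C) {s : Set ℝ} (hne : s.Nonempty)
    {a : ℝ} (h : ∀ r ∈ s, a ≤ C * r) : a ≤ C * sInf s := by
  have h1 : a / C ≤ sInf s := le_csInf hne fun r hr => (div_le_iff₀' hC).mpr (h r hr)
  calc a = C * (a / C) := by field_simp
    _ ≤ C * sInf s := mul_le_mul_of_nonneg_left h1 (le_of_lt hC)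

lemma sigma_set_nonempty (N : ℕ) (x : X) :
    {r | ∃ (Γ : Finset ℕ) (b : ℕ → ℝ), Γ.card ≤ N ∧ r = ‖x - ∑ k ∈ Γ, b k • B.e k‖}.Nonempty :=
  ⟨‖x - ∑ k ∈ (∅ : Finset ℕ), (fun _ => (0:ℝ)) k • B.e k‖, ∅, fun _ => 0, by simp, rfl⟩

lemma sigma_set_bddBelow (N : ℕ) (x : X) :
    BddBelow {r | ∃ (Γ : Finset ℕ) (b : ℕ → ℝ), Γ.card ≤ N ∧ r = ‖x - ∑ k ∈ Γ, b k • B.e k‖} :=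
  ⟨0, fun r hr => by obtain ⟨Γ, b, _, hrr⟩ := hr; rw [hrr]; exact norm_nonneg _⟩

lemma sigmaT_set_nonempty (N : ℕ) (x : X) :
    {r | ∃ Γ : Finset ℕ, Γ.card ≤ N ∧ r = ‖x - B.S Γ x‖}.Nonempty :=
  ⟨‖x - B.S ∅ x‖, ∅, by simp, rfl⟩

lemma sigmaT_set_bddBelow (N : ℕ) (x : X) :
    BddBelow {r | ∃ Γ : Finset ℕ, Γ.card ≤ N ∧ r = ‖x - B.S Γ x‖} :=
  ⟨0, fun r hr => by obtain ⟨Γ, _, hrr⟩ := hr; rw [hrr]; exact norm_nonneg _⟩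

lemma sigma_nonneg (N : ℕ) (x : X) : 0 ≤ B.sigma N x :=
  le_csInf (B.sigma_set_nonempty N x) fun r hr => by
    obtain ⟨Γ, b, _, hrr⟩ := hr; rw [hrr]; exact norm_nonneg _

lemma sigmaT_nonneg (N : ℕ) (x : X) : 0 ≤ B.sigmaT N x :=
  le_csInf (B.sigmaT_set_nonempty N x) fun r hr => by
    obtain ⟨Γ, _, hrr⟩ := hr; rw [hrr]; exact norm_nonneg _

lemma sigma_le_sigmaT (N : ℕ) (x : X) : B.sigma N x ≤ B.sigmaT N x := by
  refine csInf_le_csInf (B.sigma_set_bddBelow N x) (B.sigmaT_set_nonempty N x) ?_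
  rintro r ⟨Γ, hΓ, hrr⟩
  exact ⟨Γ, fun k => B.coeff k x, hΓ, by rw [hrr]; rfl⟩

lemma sigmaT_le (N : ℕ) (x : X) {Γ : Finset ℕ} (hΓ : Γ.card ≤ N) :
    B.sigmaT N x ≤ ‖x - B.S Γ x‖ :=
  csInf_le (B.sigmaT_set_bddBelow N x) ⟨Γ, hΓ, rfl⟩

/-- The Lebesgue constant of order `N`. -/
noncomputable def CM (K : ℝ) (N : ℕ) : ℝ :=
  1 + 2 * (16 * K^2 * (Nat.log2 N + 1) + K * B.C_norm / B.c_norm) + 16 * K^2 * B.mu N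

lemma CM_pos {K : ℝ} (hK : B.QuasiGreedyWith K) {N : ℕ} (hN : 1 ≤ N) : 0 < B.CM K N := by
  have hK1 : 1 ≤ K := B.one_le_K hK
  have hmu1 : 1 ≤ B.mu N := B.mu_ge_one hK hN
  have hCc : 0 < B.C_norm := lt_of_lt_of_le B.c_norm_pos (le_trans (B.norm_e_ge 0) (B.norm_e_le 0))
  have hc := B.c_norm_pos
  unfold CM
  have h1 : (0:ℝ) ≤ 16 * K^2 * (Nat.log2 N + 1) + K * B.C_norm / B.c_norm := by positivity
  nlinarith

lemma lebesgue_sigma {K : ℝ} (hK : B.QuasiGreedyWith K) {x : X} {π : ℕ → ℕ}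
    (hπ : B.IsGreedyPerm x π) {N : ℕ} (hN : 1 ≤ N) :
    ‖x - B.G π N x‖ ≤ B.CM K N * B.sigma N x := by
  refine le_mul_csInf (B.CM_pos hK hN) (B.sigma_set_nonempty N x) ?_
  rintro r ⟨Γ, b, hΓ, hrr⟩
  rw [hrr]
  exact B.main_lebesgue hK hπ hN Γ hΓ b

lemma eN_bddAbove {K : ℝ} (hK : B.QuasiGreedyWith K) {N : ℕ} (hN : 1 ≤ N) :
    BddAbove ({1} ∪ {r | ∃ (x : X) (π : ℕ → ℕ), B.IsGreedyPerm x π ∧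
      B.sigma N x ≠ 0 ∧ r = ‖x - B.G π N x‖ / B.sigma N x}) := by
  refine ⟨max 1 (B.CM K N), ?_⟩
  rintro r (hr | hr)
  · rw [Set.mem_singleton_iff] at hr
    rw [hr]
    exact le_max_left _ _
  · obtain ⟨x, π, hπ, hσ, hrr⟩ := hr
    have hσpos : 0 < B.sigma N x := lt_of_le_of_ne (B.sigma_nonneg N x) (Ne.symm hσ)
    rw [hrr, div_le_iff₀ hσpos]
    refine le_trans (B.lebesgue_sigma hK hπ hN) ?_
    exact mul_le_mul_of_nonneg_right (le_max_right _ _) (le_of_lt hσpos)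

lemma tildeEN_bddAbove {K : ℝ} (hK : B.QuasiGreedyWith K) {N : ℕ} (hN : 1 ≤ N) :
    BddAbove ({1} ∪ {r | ∃ (x : X) (π : ℕ → ℕ), B.IsGreedyPerm x π ∧
      B.sigmaT N x ≠ 0 ∧ r = ‖x - B.G π N x‖ / B.sigmaT N x}) := by
  refine ⟨max 1 (B.CM K N), ?_⟩
  rintro r (hr | hr)
  · rw [Set.mem_singleton_iff] at hr
    rw [hr]
    exact le_max_left _ _
  · obtain ⟨x, π, hπ, hσ, hrr⟩ := hr
    have hσpos : 0 < B.sigmaT N x := lt_of_le_of_ne (B.sigmaT_nonneg N x) (Ne.symm hσ)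
    rw [hrr, div_le_iff₀ hσpos]
    have ha : ‖x - B.G π N x‖ ≤ B.CM K N * B.sigmaT N x :=
      le_trans (B.lebesgue_sigma hK hπ hN)
        (mul_le_mul_of_nonneg_left (B.sigma_le_sigmaT N x) (le_of_lt (B.CM_pos hK hN)))
    exact le_trans ha (mul_le_mul_of_nonneg_right (le_max_right _ _) (le_of_lt hσpos))

lemma one_le_eN {K : ℝ} (hK : B.QuasiGreedyWith K) {N : ℕ} (hN : 1 ≤ N) : 1 ≤ B.eN N :=
  le_csSup (B.eN_bddAbove hK hN) (Or.inl rfl)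

lemma one_le_tildeEN {K : ℝ} (hK : B.QuasiGreedyWith K) {N : ℕ} (hN : 1 ≤ N) :
    1 ≤ B.tildeEN N :=
  le_csSup (B.tildeEN_bddAbove hK hN) (Or.inl rfl)

lemma tildeEN_le_eN {K : ℝ} (hK : B.QuasiGreedyWith K) {N : ℕ} (hN : 1 ≤ N) :
    B.tildeEN N ≤ B.eN N := by
  have h1 : 1 ≤ B.eN N := B.one_le_eN hK hN
  refine Real.sSup_le ?_ (by linarith)
  rintro r (hr | hr)
  · rw [Set.mem_singleton_iff] at hr
    rw [hr]; exact h1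
  · obtain ⟨x, π, hπ, hσ, hrr⟩ := hr
    have hσTpos : 0 < B.sigmaT N x := lt_of_le_of_ne (B.sigmaT_nonneg N x) (Ne.symm hσ)
    rcases eq_or_ne (B.sigma N x) 0 with hσ0 | hσ0
    · -- then ‖x - G‖ = 0
      have h2 := B.lebesgue_sigma hK hπ hN
      rw [hσ0, mul_zero] at h2
      have h3 : ‖x - B.G π N x‖ = 0 := le_antisymm h2 (norm_nonneg _)
      rw [hrr, h3, zero_div]
      linarith
    · have hσpos : 0 < B.sigma N x := lt_of_le_of_ne (B.sigma_nonneg N x) (Ne.symm hσ0)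
      have h4 : r ≤ ‖x - B.G π N x‖ / B.sigma N x := by
        rw [hrr]
        exact div_le_div_of_nonneg_left (norm_nonneg _) hσpos (B.sigma_le_sigmaT N x)
      refine le_trans h4 (le_csSup (B.eN_bddAbove hK hN) ?_)
      exact Or.inr ⟨x, π, hπ, hσ0, rfl⟩

lemma eN_le_CM {K : ℝ} (hK : B.QuasiGreedyWith K) {N : ℕ} (hN : 1 ≤ N) :
    B.eN N ≤ B.CM K N := by
  have hCM := B.CM_pos hK hN
  have hCM1 : 1 ≤ B.CM K N := by
    have hK1 : 1 ≤ K := B.one_le_K hK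
    have hmu1 : 1 ≤ B.mu N := B.mu_ge_one hK hN
    have hCc : 0 < B.C_norm := lt_of_lt_of_le B.c_norm_pos (le_trans (B.norm_e_ge 0) (B.norm_e_le 0))
    have hc := B.c_norm_pos
    unfold CM
    have h1 : (0:ℝ) ≤ 16 * K^2 * (Nat.log2 N + 1) + K * B.C_norm / B.c_norm := by positivity
    nlinarith
  refine Real.sSup_le ?_ (by linarith)
  rintro r (hr | hr)
  · rw [Set.mem_singleton_iff] at hr
    rw [hr]; exact hCM1
  · obtain ⟨x, π, hπ, hσ, hrr⟩ := hr
    have hσpos : 0 < B.sigma N x := lt_of_le_of_ne (B.sigma_nonneg N x) (Ne.symm hσ)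
    rw [hrr, div_le_iff₀ hσpos]
    exact B.lebesgue_sigma hK hπ hN

end QGBasis

namespace QGBasis
variable {X : Type*} [NormedAddCommGroup X] [NormedSpace ℝ X] (B : QGBasis X)

lemma mu_le_tildeEN {K : ℝ} (hK : B.QuasiGreedyWith K) {N : ℕ} (hN : 1 ≤ N) :
    B.mu N ≤ (K + 2) * B.tildeEN N := by
  have hK1 : 1 ≤ K := B.one_le_K hK
  set tEN := B.tildeEN N with htEN
  have h1t : 1 ≤ tEN := B.one_le_tildeEN hK hN
  have key : ∀ k, 1 ≤ k → k ≤ N → B.hr k ≤ (K + 2 * tEN) * B.hl k := by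
    intro k hk1 hkN
    have hlnn : 0 < B.hl k := B.hl_pos' hK hk1
    refine le_of_forall_pos_mul (C := 1 + K + 2 * tEN) fun δ hδ => ?_
    obtain ⟨r1, hr1mem, hr1⟩ := exists_lt_of_lt_csSup (B.hr_set_nonempty k)
      (show B.hr k - δ < B.hr k by linarith)
    obtain ⟨Γ, hΓcard, hΓr⟩ := hr1mem
    obtain ⟨r2, hr2mem, hr2⟩ := exists_lt_of_csInf_lt (B.hr_set_nonempty k)
      (show B.hl k < B.hl k + δ by linarith)
    obtain ⟨Γ', hΓ'card, hΓ'r⟩ := hr2mem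
    -- a fresh set of indices
    obtain ⟨D, hDsub, hDcard⟩ :=
      Set.Infinite.exists_subset_card_eq ((Γ ∪ Γ').finite_toSet.infinite_compl) (N - k)
    have hDdisj : ∀ j ∈ D, j ∉ Γ ∧ j ∉ Γ' := by
      intro j hj
      have := hDsub hj
      rw [Set.mem_compl_iff, Finset.coe_union, Set.mem_union] at this
      push_neg at this
      exact ⟨fun hc => this.1 hc, fun hc => this.2 hc⟩
    set P := Γ' ∪ D with hP
    set Q := Γ \ Γ' with hQ
    have hΓ'D : Disjoint Γ' D := by
      rw [Finset.disjoint_right]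
      intro j hj
      exact (hDdisj j hj).2
    have hPQ : Disjoint P Q := by
      rw [Finset.disjoint_left]
      intro j hj hjQ
      rw [hQ, Finset.mem_sdiff] at hjQ
      rw [hP, Finset.mem_union] at hj
      rcases hj with h | h
      · exact hjQ.2 h
      · exact (hDdisj j h).1 hjQ.1
    have hPcard : P.card = N := by
      rw [hP, Finset.card_union_of_disjoint hΓ'D, hΓ'card, hDcard]
      omega
    set cf : ℕ → ℝ := fun j => if j ∈ P then 2 else 1 with hcf
    set x := ∑ j ∈ P ∪ Q, cf j • B.e j with hx
    have hcoeff : ∀ j, B.coeff j x = if j ∈ P ∪ Q then cf j else 0 :=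
      fun j => B.coeff_finsum j (P ∪ Q) cf
    have hnice : ∃ π, B.IsGreedyPerm x π := by
      refine B.nice_of_finite_support x ((P ∪ Q).finite_toSet.subset fun j hj => ?_)
      rw [Set.mem_setOf_eq] at hj
      by_contra hjPQ
      rw [Finset.mem_coe] at hjPQ
      rw [hcoeff j, if_neg hjPQ] at hj
      exact hj rfl
    have hstrict : ∀ j ∈ P, ∀ i ∉ P, |B.coeff i x| < |B.coeff j x| := by
      intro j hj i hi
      rw [hcoeff j, if_pos (Finset.mem_union_left Q hj)]
      simp only [hcf]
      rw [if_pos hj]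
      rw [hcoeff i]
      by_cases hiPQ : i ∈ P ∪ Q
      · rw [if_pos hiPQ]
        simp only [hcf]
        rw [if_neg hi]
        norm_num
      · rw [if_neg hiPQ]
        norm_num
    obtain ⟨π, hπ⟩ := hnice
    have hG : B.G π N x = B.S P x := by
      rw [← hPcard]
      exact B.G_eq_S_prefix hπ hstrict
    have hSP : B.S P x = ∑ j ∈ P, cf j • B.e j := by
      rw [hx, B.S_finsum, Finset.inter_eq_left.mpr (Finset.subset_union_left)]
    have hxG : x - B.G π N x = ∑ j ∈ Q, B.e j := by
      rw [hG, hSP, hx, Finset.sum_union hPQ]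
      have : ∑ j ∈ Q, cf j • B.e j = ∑ j ∈ Q, B.e j := by
        refine Finset.sum_congr rfl fun j hj => ?_
        simp only [hcf]
        rw [if_neg (Finset.disjoint_right.mp hPQ hj), one_smul]
      rw [this]
      abel
    set num := ‖∑ j ∈ Q, B.e j‖ with hnum
    -- numerator lower bound
    have hsplitΓ : ∑ j ∈ Γ, B.e j = (∑ j ∈ Γ ∩ Γ', B.e j) + ∑ j ∈ Q, B.e j := by
      rw [hQ, Finset.sum_inter_add_sum_sdiff]
    have hucc : ‖∑ j ∈ Γ ∩ Γ', B.e j‖ ≤ K * ‖∑ j ∈ Γ', B.e j‖ := by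
      have h := B.ucc hK (Finset.inter_subset_right : Γ ∩ Γ' ⊆ Γ') one_pos
        (σc := fun _ => (1:ℝ)) (fun _ _ => abs_one)
      simpa using h
    have hnumlb : B.hr k - δ ≤ num + K * (B.hl k + δ) := by
      have h1 : B.hr k - δ < ‖∑ j ∈ Γ, B.e j‖ := by rw [← hΓr]; exact hr1
      have h2 : ‖∑ j ∈ Γ, B.e j‖ ≤ num + ‖∑ j ∈ Γ ∩ Γ', B.e j‖ := by
        rw [hsplitΓ]
        rw [add_comm num _]
        exact norm_add_le _ _
      have h3 : ‖∑ j ∈ Γ', B.e j‖ ≤ B.hl k + δ := by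
        rw [← hΓ'r]
        linarith
      have h4 : K * ‖∑ j ∈ Γ', B.e j‖ ≤ K * (B.hl k + δ) :=
        mul_le_mul_of_nonneg_left h3 (by linarith)
      linarith
    -- σ̃ upper bound via Δ = D ∪ Q
    set Δ := D ∪ Q with hΔ
    have hDQ : Disjoint D Q := by
      rw [Finset.disjoint_left]
      intro j hj hjQ
      rw [hQ, Finset.mem_sdiff] at hjQ
      exact (hDdisj j hj).1 hjQ.1
    have hΔcard : Δ.card ≤ N := by
      rw [hΔ, Finset.card_union_of_disjoint hDQ, hDcard]
      have : Q.card ≤ k := by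
        rw [hQ, ← hΓcard]
        exact Finset.card_le_card Finset.sdiff_subset
      omega
    have hΔsub : Δ ⊆ P ∪ Q := by
      rw [hΔ, hP]
      intro j hj
      rcases Finset.mem_union.mp hj with h | h
      · exact Finset.mem_union_left _ (Finset.mem_union_right _ h)
      · exact Finset.mem_union_right _ h
    have hPQΔ : (P ∪ Q) \ Δ = Γ' := by
      ext j
      rw [Finset.mem_sdiff, hΔ, hP, Finset.mem_union, Finset.mem_union, Finset.mem_union]
      constructor
      · rintro ⟨h1, h2⟩
        push_neg at h2
        rcases h1 with (h | h) | h
        · exact h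
        · exact absurd h h2.1
        · exact absurd h h2.2
      · intro hj
        refine ⟨Or.inl (Or.inl hj), ?_⟩
        push_neg
        constructor
        · exact fun hc => (hDdisj j hc).2 hj
        · intro hc
          rw [hQ, Finset.mem_sdiff] at hc
          exact hc.2 hj
    have hxSΔ : x - B.S Δ x = (2:ℝ) • ∑ j ∈ Γ', B.e j := by
      have h1 : B.S Δ x = ∑ j ∈ Δ, cf j • B.e j := by
        rw [hx, B.S_finsum, Finset.inter_eq_left.mpr hΔsub]
      have h2 : x = (∑ j ∈ (P ∪ Q) \ Δ, cf j • B.e j) + ∑ j ∈ Δ, cf j • B.e j := by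
        rw [hx, Finset.sum_sdiff hΔsub]
      rw [h1, h2, hPQΔ]
      have h3 : ∑ j ∈ Γ', cf j • B.e j = (2:ℝ) • ∑ j ∈ Γ', B.e j := by
        rw [Finset.smul_sum]
        refine Finset.sum_congr rfl fun j hj => ?_
        simp only [hcf]
        rw [if_pos (Finset.mem_union_left _ hj)]
      rw [h3]
      abel
    have hσT : B.sigmaT N x ≤ 2 * (B.hl k + δ) := by
      refine le_trans (B.sigmaT_le N x hΔcard) ?_
      rw [hxSΔ, norm_smul, Real.norm_eq_abs]
      have : |(2:ℝ)| = 2 := by norm_num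
      rw [this]
      have h3 : ‖∑ j ∈ Γ', B.e j‖ ≤ B.hl k + δ := by
        rw [← hΓ'r]; linarith
      linarith
    -- numerator vs tEN
    have hbound : num ≤ tEN * (2 * (B.hl k + δ)) := by
      rcases eq_or_ne (B.sigmaT N x) 0 with hσ0 | hσ0
      · have h2 := B.lebesgue_sigma hK hπ hN
        have h5 : B.sigma N x ≤ B.sigmaT N x := B.sigma_le_sigmaT N x
        have h6 : B.sigma N x = 0 := le_antisymm (hσ0 ▸ h5) (B.sigma_nonneg N x)
        rw [h6, mul_zero] at h2
        have h7 : ‖x - B.G π N x‖ = 0 := le_antisymm h2 (norm_nonneg _)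
        rw [hxG] at h7
        rw [hnum, h7]
        positivity
      · have hσpos : 0 < B.sigmaT N x := lt_of_le_of_ne (B.sigmaT_nonneg N x) (Ne.symm hσ0)
        have hr' : ‖x - B.G π N x‖ / B.sigmaT N x ≤ tEN :=
          le_csSup (B.tildeEN_bddAbove hK hN) (Or.inr ⟨x, π, hπ, hσ0, rfl⟩)
        have h8 : ‖x - B.G π N x‖ ≤ tEN * B.sigmaT N x := by
          rw [div_le_iff₀ hσpos] at hr'
          linarith
        rw [hxG] at h8
        calc num ≤ tEN * B.sigmaT N x := h8
          _ ≤ tEN * (2 * (B.hl k + δ)) :=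
              mul_le_mul_of_nonneg_left hσT (by linarith)
    -- conclude
    have final : B.hr k - δ ≤ tEN * (2 * (B.hl k + δ)) + K * (B.hl k + δ) := by linarith
    nlinarith [final]
  have hmu : B.mu N ≤ K + 2 * tEN := by
    refine Real.sSup_le ?_ (by linarith)
    rintro r ⟨k, hk1, hkN, hrr⟩
    rw [hrr, div_le_iff₀ (B.hl_pos' hK hk1)]
    calc B.hr k ≤ (K + 2 * tEN) * B.hl k := key k hk1 hkN
      _ = B.hl k * (K + 2 * tEN) := by ring
      _ = (K + 2 * tEN) * B.hl k := by ring
  have hfin : K + 2 * tEN ≤ (K + 2) * tEN := by nlinarith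
  linarith

lemma CM_le_mu_log {K : ℝ} (hK : B.QuasiGreedyWith K) {N : ℕ} (hN : 1 ≤ N) :
    B.CM K N ≤ ((1 + 2 * (K * B.C_norm / B.c_norm) + 80 * K^2) / Real.log 2)
      * B.mu N * Real.log (N + 1) := by
  have hK1 : 1 ≤ K := B.one_le_K hK
  have hmu1 : 1 ≤ B.mu N := B.mu_ge_one hK hN
  have hCc : 0 < B.C_norm := lt_of_lt_of_le B.c_norm_pos (le_trans (B.norm_e_ge 0) (B.norm_e_le 0))
  have hc := B.c_norm_pos
  set Qq := K * B.C_norm / B.c_norm with hQq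
  have hQ0 : 0 < Qq := by rw [hQq]; positivity
  set L := (Nat.log2 N : ℝ) with hL
  set l := Real.log ((N:ℝ) + 1) with hl
  set l2 := Real.log 2 with hl2
  have hl2pos : 0 < l2 := Real.log_pos (by norm_num)
  have hl2l : l2 ≤ l := by
    rw [hl2, hl]
    refine Real.log_le_log (by norm_num) ?_
    have : (1:ℝ) ≤ (N:ℝ) := by exact_mod_cast hN
    linarith
  have hlpos : 0 < l := lt_of_lt_of_le hl2pos hl2l
  have hLl : L * l2 ≤ l := by
    have h1 : (2:ℝ)^(Nat.log2 N) ≤ (N:ℝ) := by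
      have := Nat.log2_self_le (by omega : N ≠ 0)
      exact_mod_cast this
    have h2 : Real.log ((2:ℝ)^(Nat.log2 N)) ≤ Real.log ((N:ℝ) + 1) := by
      refine Real.log_le_log (by positivity) (by linarith)
    rw [Real.log_pow] at h2
    rw [hL, hl2, hl]
    exact_mod_cast h2
  have hmul : l ≤ B.mu N * l := by nlinarith
  have hmul2 : l2 ≤ B.mu N * l := le_trans hl2l hmul
  rw [show ((1 + 2 * Qq + 80 * K^2) / l2) * B.mu N * l
      = ((1 + 2 * Qq + 80 * K^2) * (B.mu N * l)) / l2 by ring]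
  rw [le_div_iff₀ hl2pos]
  unfold CM
  rw [← hQq, ← hL]
  have p2 : 2 * Qq * l2 ≤ 2 * Qq * (B.mu N * l) :=
    mul_le_mul_of_nonneg_left hmul2 (by linarith)
  have p3 : 32 * K^2 * L * l2 ≤ 32 * K^2 * (B.mu N * l) := by
    have h1 : 32 * K^2 * (L * l2) ≤ 32 * K^2 * l :=
      mul_le_mul_of_nonneg_left hLl (by positivity)
    have h2 : 32 * K^2 * l ≤ 32 * K^2 * (B.mu N * l) :=
      mul_le_mul_of_nonneg_left hmul (by positivity)
    nlinarith [h1, h2]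
  have p4 : 32 * K^2 * l2 ≤ 32 * K^2 * (B.mu N * l) :=
    mul_le_mul_of_nonneg_left hmul2 (by positivity)
  have p5 : 16 * K^2 * B.mu N * l2 ≤ 16 * K^2 * (B.mu N * l) := by
    have h1 : B.mu N * l2 ≤ B.mu N * l :=
      mul_le_mul_of_nonneg_left (le_trans hl2l (le_refl l)) (by linarith)
    nlinarith [h1]
  nlinarith [hmul2, p2, p3, p4, p5]

end QGBasis

/-- `μ(N) ≲ ẽ_N ≤ e_N ≲ μ(N) log N` for a quasi-greedy basis. -/
theorem stmt16 {X : Type*} [NormedAddCommGroup X] [NormedSpace ℝ X] [CompleteSpace X]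
    (B : QGBasis X) (K : ℝ) (hK : B.QuasiGreedyWith K) :
    ∃ c C : ℝ, 0 < c ∧ 0 < C ∧ ∀ N : ℕ, 1 ≤ N →
      c * B.mu N ≤ B.tildeEN N ∧
      B.tildeEN N ≤ B.eN N ∧
      B.eN N ≤ C * B.mu N * Real.log (N + 1) := by
  have hK1 : 1 ≤ K := B.one_le_K hK
  have hCc : 0 < B.C_norm :=
    lt_of_lt_of_le B.c_norm_pos (le_trans (B.norm_e_ge 0) (B.norm_e_le 0))
  have hc := B.c_norm_pos
  have hl2 : 0 < Real.log 2 := Real.log_pos (by norm_num)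
  refine ⟨1 / (K + 2), (1 + 2 * (K * B.C_norm / B.c_norm) + 80 * K^2) / Real.log 2,
    by positivity, by positivity, ?_⟩
  intro N hN
  refine ⟨?_, B.tildeEN_le_eN hK hN, ?_⟩
  · have h := B.mu_le_tildeEN hK hN
    rw [div_mul_eq_mul_div, div_le_iff₀ (by linarith : (0:ℝ) < K + 2)]
    nlinarith [h]
  · exact le_trans (B.eN_le_CM hK hN) (B.CM_le_mu_log hK hN)
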